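/- arXiv:2302.07018 — 4 statements merged into one kernel-verified Lean document; each statement's English description precedes it below -/
import Mathlib

section
/- Let h(z) = p(z) - i l q(z) = ∏_{j=1}^n (z - z_j), where p and q are monic real polynomials with deg p = n, deg q ≤ n - 1, l ∈ ℝ, and suppose all zeros z_j of h lie in the open upper half-plane ℂ₊. Then p has exactly s negative zeros and exactly n - s positive zeros if and only if π/2 + π(s-1) < Σ_{j=1}^n Arg z_j < π/2 + π s. -/
/-- The principal value of the argument in `[-π, π)`. -/
noncomputable def argPV (z : ℂ) : ℝ :=
  if Complex.arg z = Real.pi then -Real.pi else Complex.arg z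

open Real Polynomial Finset

noncomputable def theta {n : ℕ} (a b : Fin n → ℝ) (x : ℝ) : ℝ :=
  ∑ j, (Real.arctan ((x - a j)/b j) - π/2)

lemma theta_strictMono {n : ℕ} (a b : Fin n → ℝ) (hb : ∀ j, 0 < b j) (hn : 0 < n) :
    StrictMono (theta a b) := by
  intro u v huv
  refine Finset.sum_lt_sum_of_nonempty (Finset.univ_nonempty_iff.mpr ⟨⟨0, hn⟩⟩) (fun j _ => ?_)
  have := Real.arctan_strictMono (show (u - a j)/b j < (v - a j)/b j from
    div_lt_div_of_pos_right (by linarith) (hb j))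
  linarith

lemma theta_mem {n : ℕ} (a b : Fin n → ℝ) (hn : 0 < n) (x : ℝ) :
    theta a b x ∈ Set.Ioo (-(n * π)) 0 := by
  have hne : (Finset.univ : Finset (Fin n)).Nonempty := Finset.univ_nonempty_iff.mpr ⟨⟨0, hn⟩⟩
  constructor
  · have := Finset.sum_lt_sum_of_nonempty hne (f := fun _ : Fin n => -π)
      (g := fun j => Real.arctan ((x - a j)/b j) - π/2)
      (fun j _ => by have := Real.neg_pi_div_two_lt_arctan ((x - a j)/b j); linarith)
    simpa [Finset.sum_const, theta] using this
  · have := Finset.sum_lt_sum_of_nonempty hne (g := fun _ : Fin n => (0:ℝ))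
      (f := fun j => Real.arctan ((x - a j)/b j) - π/2)
      (fun j _ => by have := Real.arctan_lt_pi_div_two ((x - a j)/b j); linarith)
    simpa [theta] using this

lemma theta_tendsto_top {n : ℕ} (a b : Fin n → ℝ) (hb : ∀ j, 0 < b j) :
    Filter.Tendsto (theta a b) Filter.atTop (nhds 0) := by
  have h0 : (0:ℝ) = ∑ _j : Fin n, (π/2 - π/2) := by simp
  rw [h0]
  refine tendsto_finset_sum _ (fun j _ => Filter.Tendsto.sub_const ?_ _)
  refine Real.tendsto_arctan_atTop.comp ?_ |>.mono_right nhdsWithin_le_nhds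
  apply Filter.tendsto_atTop_atTop.mpr
  intro c
  exact ⟨c * b j + a j, fun x hx => by
    rw [le_div_iff₀ (hb j)]; linarith⟩

lemma theta_tendsto_bot {n : ℕ} (a b : Fin n → ℝ) (hb : ∀ j, 0 < b j) :
    Filter.Tendsto (theta a b) Filter.atBot (nhds (-(n * π))) := by
  have h0 : (-(n * π):ℝ) = ∑ _j : Fin n, (-(π/2) - π/2) := by
    simp [Finset.sum_const]; ring
  rw [h0]
  refine tendsto_finset_sum _ (fun j _ => Filter.Tendsto.sub_const ?_ _)
  refine Real.tendsto_arctan_atBot.comp ?_ |>.mono_right nhdsWithin_le_nhds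
  apply Filter.tendsto_atBot_atBot.mpr
  intro c
  exact ⟨c * b j + a j, fun x hx => by
    rw [div_le_iff₀ (hb j)]; linarith⟩

lemma theta_surj {n : ℕ} (a b : Fin n → ℝ) (hb : ∀ j, 0 < b j) (hn : 0 < n) (v : ℝ)
    (hv : v ∈ Set.Ioo (-(n * π)) 0) : ∃ x, theta a b x = v := by
  obtain ⟨u, hu⟩ := (Filter.Tendsto.eventually_lt (theta_tendsto_bot a b hb)
    tendsto_const_nhds hv.1).exists
  obtain ⟨w, hw⟩ := (Filter.Tendsto.eventually_lt tendsto_const_nhds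
    (theta_tendsto_top a b hb) hv.2).exists
  have hcont : ContinuousOn (theta a b) (Set.Icc u w) := by
    apply Continuous.continuousOn
    exact continuous_finset_sum _ fun j _ =>
      (Real.continuous_arctan.comp (by continuity)).sub continuous_const
  have huw : u ≤ w := by
    by_contra hc
    push_neg at hc
    have := theta_strictMono a b hb hn hc
    linarith
  have := intermediate_value_Icc huw hcont
  have hmem : v ∈ Set.Icc (theta a b u) (theta a b w) := ⟨hu.le, hw.le⟩
  obtain ⟨x, _, hx⟩ := this hmem
  exact ⟨x, hx⟩

lemma polar (x a b : ℝ) (hb : 0 < b) :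
    (x : ℂ) - (a + b * Complex.I)
      = (Real.sqrt ((x - a)^2 + b^2) : ℝ) * Complex.exp ((Real.arctan ((x - a)/b) - π/2 : ℝ) * Complex.I) := by
  rw [Complex.exp_mul_I, ← Complex.ofReal_cos, ← Complex.ofReal_sin]
  rw [Real.cos_sub_pi_div_two, Real.sin_sub_pi_div_two]
  rw [Real.sin_arctan, Real.cos_arctan]
  have hs : Real.sqrt ((x - a)^2 + b^2) = b * Real.sqrt (1 + ((x-a)/b)^2) := by
    rw [← Real.sqrt_sq hb.le, ← Real.sqrt_mul (by positivity)]
    congr 1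
    field_simp
    rw [Real.sqrt_sq hb.le]; ring
  have h1 : Real.sqrt (1 + ((x-a)/b)^2) > 0 := by positivity
  apply Complex.ext <;> simp [hs] <;> field_simp

lemma arg_eq (a b : ℝ) (hb : 0 < b) :
    Complex.arg (a + b * Complex.I) = Real.arctan (-a/b) + π/2 := by
  have h := polar 0 a b hb
  simp only [Complex.ofReal_zero, zero_sub, neg_div] at h
  rw [show -(a:ℝ)/b = -(a/b) by ring]
  set φ : ℝ := Real.arctan (-(a/b)) + π/2 with hφ
  have hz : (a + b * Complex.I : ℂ) = (Real.sqrt ((-a)^2 + b^2) : ℝ) * Complex.exp ((φ:ℝ) * Complex.I) := by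
    have hsplit : ((φ:ℝ) : ℂ) * Complex.I
        = ((Real.arctan (-(a/b)) - π/2 : ℝ) : ℂ) * Complex.I + π * Complex.I := by
      push_cast [hφ]; ring
    rw [hsplit, Complex.exp_add, Complex.exp_pi_mul_I]
    linear_combination -h
  rw [hz, Complex.exp_mul_I]
  rw [Complex.arg_real_mul _ (by positivity)]
  refine Complex.arg_cos_add_sin_mul_I ⟨?_, ?_⟩ <;> rw [hφ]
  · have := Real.neg_pi_div_two_lt_arctan (-(a/b)); linarith [Real.pi_pos]
  · have := Real.arctan_lt_pi_div_two (-(a/b)); linarith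

lemma count_lemma (n s : ℕ) (S : ℝ) (h0 : 0 < S) (h1 : S < n * π) :
    ((((Finset.range n).filter (fun m : ℕ => π/2 + π*(m:ℝ) < S)).card = s ∧
      (((Finset.range n).filter (fun m : ℕ => S < π/2 + π*(m:ℝ))).card = n - s))
      ↔ (π/2 + π*((s:ℝ)-1) < S ∧ S < π/2 + π*s)) := by
  have hπ := Real.pi_pos
  constructor
  · rintro ⟨hN, hP⟩
    have hsn : s ≤ n := by
      calc s = _ := hN.symm
        _ ≤ (Finset.range n).card := Finset.card_filter_le _ _
        _ = n := Finset.card_range n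
    have hnb : ∀ m ∈ Finset.range n, S ≠ π/2 + π*(m:ℝ) := by
      intro m₀ hm₀ heq
      set F1 := (Finset.range n).filter (fun m : ℕ => π/2 + π*(m:ℝ) < S)
      set F2 := (Finset.range n).filter (fun m : ℕ => S < π/2 + π*(m:ℝ))
      have hdisj : Disjoint F1 F2 := by
        rw [Finset.disjoint_left]
        intro k hk1 hk2
        simp only [F1, F2, Finset.mem_filter] at hk1 hk2
        linarith [hk1.2, hk2.2]
      have hsub : F1 ∪ F2 ⊆ (Finset.range n).erase m₀ := by
        intro k hk
        rcases Finset.mem_union.mp hk with hk | hk <;>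
          simp only [F1, F2, Finset.mem_filter] at hk <;>
          refine Finset.mem_erase.mpr ⟨?_, hk.1⟩ <;>
          rintro rfl <;> linarith [hk.2]
      have hcard : F1.card + F2.card ≤ n - 1 := by
        have := Finset.card_le_card hsub
        rwa [Finset.card_union_of_disjoint hdisj, Finset.card_erase_of_mem hm₀,
          Finset.card_range] at this
      have hn1 : 1 ≤ n := by
        rcases Finset.mem_range.mp hm₀ with h
        omega
      rw [hN, hP] at hcard
      omega
    constructor
    · rcases Nat.eq_zero_or_pos s with rfl | hs
      · push_cast; linarith
      by_contra hc
      push_neg at hc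
      have hsub : (Finset.range n).filter (fun m : ℕ => π/2 + π*(m:ℝ) < S) ⊆ Finset.range (s-1) := by
        intro m hm
        simp only [Finset.mem_filter] at hm
        rw [Finset.mem_range]
        by_contra hc2
        push_neg at hc2
        have : ((s:ℝ) - 1) ≤ (m:ℝ) := by
          have : ((s - 1 : ℕ):ℝ) ≤ (m:ℝ) := by exact_mod_cast hc2
          rw [Nat.cast_sub hs] at this
          exact_mod_cast this
        nlinarith [hm.2]
      have := Finset.card_le_card hsub
      rw [hN, Finset.card_range] at this
      omega
    · by_contra hc
      push_neg at hc
      rcases Nat.lt_or_ge s n with hlt | hge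
      · have hsub : Finset.range (s+1) ⊆ (Finset.range n).filter (fun m : ℕ => π/2 + π*(m:ℝ) < S) := by
          intro m hm
          rw [Finset.mem_range] at hm
          have hmn : m < n := by omega
          refine Finset.mem_filter.mpr ⟨Finset.mem_range.mpr hmn, ?_⟩
          have hms : (m:ℝ) ≤ s := by exact_mod_cast Nat.lt_succ_iff.mp hm
          have := hnb m (Finset.mem_range.mpr hmn)
          rcases lt_or_eq_of_le (show π/2 + π*(m:ℝ) ≤ S by nlinarith) with h | h
          · exact h
          · exact absurd h.symm this
        have := Finset.card_le_card hsub
        rw [hN, Finset.card_range] at this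
        omega
      · have : (n:ℝ) ≤ s := by exact_mod_cast hge
        nlinarith
  · rintro ⟨hl, hr⟩
    have hsn : s ≤ n := by
      by_contra hc
      push_neg at hc
      have : (n:ℝ) + 1 ≤ s := by exact_mod_cast hc
      nlinarith
    constructor
    · have : (Finset.range n).filter (fun m : ℕ => π/2 + π*(m:ℝ) < S) = Finset.range s := by
        ext m
        simp only [Finset.mem_filter, Finset.mem_range]
        constructor
        · rintro ⟨hmn, hmlt⟩
          by_contra hc
          push_neg at hc
          have : (s:ℝ) ≤ m := by exact_mod_cast hc
          nlinarith
        · intro hms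
          refine ⟨lt_of_lt_of_le hms hsn, ?_⟩
          have : (m:ℝ) + 1 ≤ s := by exact_mod_cast hms
          nlinarith
      rw [this, Finset.card_range]
    · have : (Finset.range n).filter (fun m : ℕ => S < π/2 + π*(m:ℝ))
          = (Finset.range n).filter (fun m => s ≤ m) := by
        ext m
        simp only [Finset.mem_filter, Finset.mem_range]
        constructor
        · rintro ⟨hmn, hmlt⟩
          refine ⟨hmn, ?_⟩
          by_contra hc
          push_neg at hc
          have : (m:ℝ) + 1 ≤ s := by exact_mod_cast hc
          nlinarith
        · rintro ⟨hmn, hsm⟩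
          refine ⟨hmn, ?_⟩
          have : (s:ℝ) ≤ m := by exact_mod_cast hsm
          nlinarith
      rw [this]
      have : (Finset.range n).filter (fun m => s ≤ m) = Finset.Ico s n := by
        ext m
        simp only [Finset.mem_filter, Finset.mem_range, Finset.mem_Ico]
        tauto
      rw [this, Nat.card_Ico]

lemma roots_eq {n : ℕ} (p : Polynomial ℝ) (hp : p.Monic) (hpd : p.natDegree = n)
    (x : Fin n → ℝ) (hinj : Function.Injective x) (hroot : ∀ k, p.eval (x k) = 0) :
    p.roots = Multiset.map x Finset.univ.val := by
  have hp0 : p ≠ 0 := hp.ne_zero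
  have hnd : (Multiset.map x Finset.univ.val).Nodup :=
    Multiset.Nodup.map hinj Finset.univ.nodup
  have hle : Multiset.map x Finset.univ.val ≤ p.roots := by
    rw [Multiset.le_iff_count]
    intro r
    by_cases hr : r ∈ Multiset.map x Finset.univ.val
    · rw [Multiset.count_eq_one_of_mem hnd hr, Polynomial.count_roots]
      obtain ⟨k, _, rfl⟩ := Multiset.mem_map.mp hr
      exact (Polynomial.rootMultiplicity_pos hp0).mpr (hroot k)
    · rw [Multiset.count_eq_zero_of_notMem hr]
      exact Nat.zero_le _
  refine (Multiset.eq_of_le_of_card_le hle ?_).symm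
  rw [Multiset.card_map]
  have := p.card_roots'
  simpa [hpd] using this

lemma card_filter_eq {n : ℕ} (x : Fin n → ℝ) (pred : ℝ → Prop) [DecidablePred pred] :
    (Multiset.filter pred (Multiset.map x Finset.univ.val)).card
      = (Finset.univ.filter (fun k => pred (x k))).card := by
  rw [← Multiset.countP_eq_card_filter, Multiset.countP_map]
  rw [Finset.card_filter]
  simp [Multiset.countP_eq_card_filter, Function.comp]
  rfl

lemma card_reindex (n : ℕ) (Q : ℕ → Prop) [DecidablePred Q] :
    (Finset.univ.filter (fun k : Fin n => Q (n - 1 - (k:ℕ)))).card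
      = ((Finset.range n).filter Q).card := by
  refine Finset.card_bij (fun k _ => n - 1 - (k:ℕ)) ?_ ?_ ?_
  · intro k hk
    have hk2 := (Finset.mem_filter.mp hk).2
    have := k.isLt
    show (n - 1 - (k:ℕ)) ∈ Finset.filter Q (Finset.range n)
    exact Finset.mem_filter.mpr ⟨Finset.mem_range.mpr (by omega), hk2⟩
  · intro k₁ h₁ k₂ h₂ he
    have := k₁.isLt; have := k₂.isLt
    exact Fin.ext (by omega)
  · intro m hm
    simp only [Finset.mem_filter, Finset.mem_range] at hm
    refine ⟨⟨n - 1 - m, by omega⟩, Finset.mem_filter.mpr ⟨Finset.mem_univ _, ?_⟩, show n - 1 - (n - 1 - m) = m by omega⟩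
    simpa [show n - 1 - (n - 1 - m) = m by omega] using hm.2

lemma prod_polar {n : ℕ} (a b : Fin n → ℝ) (hb : ∀ j, 0 < b j) (x : ℝ) :
    ∏ j, ((x : ℂ) - (a j + b j * Complex.I))
      = ((∏ j, Real.sqrt ((x - a j)^2 + (b j)^2) : ℝ) : ℂ) * Complex.exp ((theta a b x : ℝ) * Complex.I) := by
  rw [theta, Complex.ofReal_sum, Finset.sum_mul, Complex.exp_sum, Complex.ofReal_prod, ← Finset.prod_mul_distrib]
  exact Finset.prod_congr rfl fun j _ => polar x (a j) (b j) (hb j)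


/-- Let `h = p - i l q = ∏ⱼ (z - zⱼ)` with `p`, `q` monic real, `deg p = n`,
`deg q ≤ n - 1`, `l ∈ ℝ`, and all zeros `zⱼ` of `h` in the open upper half-plane.
Then `p` has exactly `s` negative zeros and exactly `n - s` positive zeros if and only
if `π/2 + π (s - 1) < ∑ⱼ Arg zⱼ < π/2 + π s`. -/

theorem neg_pos_zero_count_iff_arg_sum (n s : ℕ) (p q : Polynomial ℝ) (l : ℝ)
    (hp : p.Monic) (hq : q.Monic) (hpd : p.natDegree = n) (hqd : q.natDegree ≤ n - 1)
    (z : Fin n → ℂ)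
    (hfact : p.map (algebraMap ℝ ℂ)
        - Polynomial.C (Complex.I * l) * q.map (algebraMap ℝ ℂ)
      = ∏ j, (Polynomial.X - Polynomial.C (z j)))
    (hupper : ∀ j, 0 < (z j).im) :
    ((p.roots.filter (fun x => x < 0)).card = s ∧
     (p.roots.filter (fun x => 0 < x)).card = n - s)
      ↔ (Real.pi / 2 + Real.pi * ((s : ℝ) - 1) < ∑ j, argPV (z j) ∧
         ∑ j, argPV (z j) < Real.pi / 2 + Real.pi * s) := by
  have hπ := Real.pi_pos
  rcases Nat.eq_zero_or_pos n with rfl | hn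
  · -- degenerate case n = 0
    have hp1 : p = 1 := hp.natDegree_eq_zero.mp hpd
    subst hp1
    rw [Polynomial.roots_one]
    simp only [Multiset.empty_eq_zero, Multiset.filter_zero, Multiset.card_zero,
      Finset.univ_eq_empty, Finset.sum_empty, Nat.zero_sub]
    constructor
    · rintro ⟨h, -⟩
      subst h
      constructor <;> push_cast <;> linarith
    · rintro ⟨h1, -⟩
      have hs : s = 0 := by
        by_contra hs
        have : 1 ≤ s := Nat.one_le_iff_ne_zero.mpr hs
        have : (1:ℝ) ≤ s := by exact_mod_cast this
        nlinarith
      subst hs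
      exact ⟨rfl, trivial⟩
  · set a : Fin n → ℝ := fun j => (z j).re with ha
    set b : Fin n → ℝ := fun j => (z j).im with hbdef
    have hb : ∀ j, 0 < b j := hupper
    set R : ℝ → ℝ := fun x => ∏ j, Real.sqrt ((x - a j)^2 + (b j)^2) with hRdef
    have hR : ∀ x, 0 < R x := by
      intro x
      refine Finset.prod_pos fun j _ => Real.sqrt_pos.mpr ?_
      have := sq_nonneg (x - a j)
      have := pow_pos (hb j) 2
      linarith
    have peval : ∀ x : ℝ, p.eval x = R x * Real.cos (theta a b x) := by
      intro x
      have hev : ((p.eval x : ℝ) : ℂ) - Complex.I * l * ((q.eval x : ℝ) : ℂ)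
          = ∏ j, ((x:ℂ) - z j) := by
        have hev := congrArg (Polynomial.eval (x:ℂ)) hfact
        simp only [Polynomial.eval_sub, Polynomial.eval_mul, Polynomial.eval_C,
          Polynomial.eval_prod, Polynomial.eval_X, Polynomial.eval_map,
          ← Complex.coe_algebraMap, Polynomial.eval₂_at_apply] at hev
        exact_mod_cast hev
      have hzz : ∀ j : Fin n, (x:ℂ) - z j = (x:ℂ) - ((a j : ℝ) + (b j : ℝ) * Complex.I) := by
        intro j; rw [ha, hbdef]; simp only; rw [Complex.re_add_im]
      rw [Finset.prod_congr rfl (fun j _ => hzz j), prod_polar a b hb x] at hev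
      have hre := congrArg Complex.re hev
      simpa [Complex.mul_re, ← Complex.ofReal_prod] using hre
    -- the n distinct real roots
    set v : Fin n → ℝ := fun k => -(π/2) - π * ((k:ℕ):ℝ) with hvdef
    have hvmem : ∀ k, v k ∈ Set.Ioo (-(n * π)) 0 := by
      intro k
      have hk : ((k:ℕ):ℝ) + 1 ≤ n := by exact_mod_cast k.isLt
      constructor
      · simp only [hvdef]; nlinarith
      · simp only [hvdef]
        have : (0:ℝ) ≤ ((k:ℕ):ℝ) := Nat.cast_nonneg _
        nlinarith
    choose xx hxx using fun k => theta_surj a b hb hn (v k) (hvmem k)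
    have hmono := theta_strictMono a b hb hn
    have hinj : Function.Injective xx := by
      intro k k' he
      have : v k = v k' := by rw [← hxx k, ← hxx k', he]
      simp only [hvdef] at this
      have h2 : ((k:ℕ):ℝ) = ((k':ℕ):ℝ) := mul_left_cancel₀ hπ.ne' (by linarith)
      exact Fin.ext (by exact_mod_cast h2)
    have hroot : ∀ k, p.eval (xx k) = 0 := by
      intro k
      rw [peval, hxx]
      have : Real.cos (v k) = 0 := by
        simp only [hvdef]
        rw [show -(π/2) - π * (k:ℕ) = -(π/2 + π * (k:ℕ)) by ring, Real.cos_neg,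
          Real.cos_add, Real.cos_pi_div_two, Real.sin_pi_div_two]
        rw [show π * ((k:ℕ):ℝ) = ((k:ℕ):ℝ) * π by ring, Real.sin_nat_mul_pi]
        ring
      rw [this, mul_zero]
    have hroots : p.roots = Multiset.map xx Finset.univ.val :=
      roots_eq p hp hpd xx hinj hroot
    -- the sum of arguments
    set S : ℝ := ∑ j, argPV (z j) with hSdef
    have hargj : ∀ j, argPV (z j) = Real.arctan (-(a j)/(b j)) + π/2 := by
      intro j
      have hzj : z j = (a j : ℝ) + (b j : ℝ) * Complex.I := by
        rw [ha, hbdef]; simp only; rw [Complex.re_add_im]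
      have harg : Complex.arg (z j) = Real.arctan (-(a j)/(b j)) + π/2 := by
        rw [hzj]; exact arg_eq (a j) (b j) (hb j)
      rw [argPV, if_neg, harg]
      rw [harg]
      have := Real.arctan_lt_pi_div_two (-(a j)/(b j))
      intro hc
      linarith
    have hS : S = theta a b 0 + n * π := by
      have step1 : S = ∑ j, ((Real.arctan ((0 - a j)/b j) - π/2) + π) := by
        refine Finset.sum_congr rfl fun j _ => ?_
        rw [hargj j, zero_sub]
        ring
      rw [step1, Finset.sum_add_distrib, theta]
      simp [Finset.sum_const, Finset.card_univ, mul_comm]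
    have hθ0 := theta_mem a b hn 0
    have hS0 : 0 < S := by rw [hS]; linarith [hθ0.1]
    have hS1 : S < n * π := by rw [hS]; linarith [hθ0.2]
    -- counting
    have hcount : ∀ (pred : ℝ → Prop) [DecidablePred pred],
        (p.roots.filter pred).card = (Finset.univ.filter (fun k => pred (xx k))).card := by
      intro pred _
      rw [hroots, card_filter_eq]
    have hneg : (p.roots.filter (fun x => x < 0)).card
        = ((Finset.range n).filter (fun m : ℕ => π/2 + π*(m:ℝ) < S)).card := by
      rw [hcount]
      rw [show (Finset.univ.filter (fun k => xx k < 0))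
          = Finset.univ.filter (fun k : Fin n => (π/2 + π*((n - 1 - (k:ℕ) : ℕ):ℝ) < S)) from
        Finset.filter_congr fun k _ => ?_]
      · exact card_reindex n (fun m : ℕ => π/2 + π*(m:ℝ) < S)
      · have hk : ((k:ℕ):ℝ) + 1 ≤ n := by exact_mod_cast k.isLt
        have hcast : ((n - 1 - (k:ℕ) : ℕ):ℝ) = (n:ℝ) - 1 - (k:ℕ) := by
          have h1 : (k:ℕ) ≤ n - 1 := by omega
          rw [Nat.cast_sub h1, Nat.cast_sub (by omega : 1 ≤ n), Nat.cast_one]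
        rw [hcast]
        have h1 : xx k < 0 ↔ theta a b (xx k) < theta a b 0 := ⟨fun h => hmono h, fun h => hmono.lt_iff_lt.mp h⟩
        rw [h1, hxx]
        simp only [hvdef, eq_iff_iff]
        constructor <;> intro <;> [linarith [hS]; linarith [hS]]
    have hpos : (p.roots.filter (fun x => 0 < x)).card
        = ((Finset.range n).filter (fun m : ℕ => S < π/2 + π*(m:ℝ))).card := by
      rw [hcount]
      rw [show (Finset.univ.filter (fun k => 0 < xx k))
          = Finset.univ.filter (fun k : Fin n => (S < π/2 + π*((n - 1 - (k:ℕ) : ℕ):ℝ))) from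
        Finset.filter_congr fun k _ => ?_]
      · exact card_reindex n (fun m : ℕ => S < π/2 + π*(m:ℝ))
      · have hk : ((k:ℕ):ℝ) + 1 ≤ n := by exact_mod_cast k.isLt
        have hcast : ((n - 1 - (k:ℕ) : ℕ):ℝ) = (n:ℝ) - 1 - (k:ℕ) := by
          have h1 : (k:ℕ) ≤ n - 1 := by omega
          rw [Nat.cast_sub h1, Nat.cast_sub (by omega : 1 ≤ n), Nat.cast_one]
        rw [hcast]
        have h1 : 0 < xx k ↔ theta a b 0 < theta a b (xx k) := ⟨fun h => hmono h, fun h => hmono.lt_iff_lt.mp h⟩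
        rw [h1, hxx]
        simp only [hvdef, eq_iff_iff]
        constructor <;> intro <;> [linarith [hS]; linarith [hS]]
    rw [hneg, hpos]
    exact count_lemma n s S hS0 hS1
end

section
/- Let h(z) = p(z) - i l q(z) = ∏_{j=1}^n (z - z_j), where p and q are monic real polynomials with deg p = n, deg q ≤ n - 1, l ∈ ℝ, and suppose all zeros z_j of h lie in the open upper half-plane ℂ₊. Then p has exactly s negative zeros, exactly n - s - 1 positive zeros, and a zero at t = 0, if and only if Σ_{j=1}^n Arg z_j = π/2 + π s. -/
open Real Polynomial Finset

lemma arg_of_im_neg' {w : ℂ} (hw : w.im < 0) :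
    Complex.arg w = Real.arctan (w.re / (-w.im)) - Real.pi / 2 := by
  have hw0 : w ≠ 0 := fun h => by simp [h] at hw
  have h1 : Complex.arg w < 0 := Complex.arg_neg_iff.2 hw
  have h2 : -Real.pi < Complex.arg w := Complex.neg_pi_lt_arg w
  have habs : (0:ℝ) < ‖w‖ := norm_pos_iff.mpr hw0
  have hx : Complex.arg w + Real.pi/2 ∈ Set.Ioo (-(Real.pi/2)) (Real.pi/2) :=
    ⟨by linarith, by linarith⟩
  have hsin : Real.sin (Complex.arg w) = w.im / ‖w‖ := Complex.sin_arg w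
  have hcos : Real.cos (Complex.arg w) = w.re / ‖w‖ := Complex.cos_arg hw0
  have htan : Real.tan (Complex.arg w + Real.pi/2) = w.re / (-w.im) := by
    rw [Real.tan_eq_sin_div_cos, Real.sin_add_pi_div_two, Real.cos_add_pi_div_two,
      hcos, hsin]
    field_simp
  have := Real.arctan_eq_of_tan_eq htan hx
  linarith


theorem zero_root_iff_arg_sum_aux (n s : ℕ) (p q : Polynomial ℝ) (l : ℝ)
    (hp : p.Monic) (hq : q.Monic) (hpd : p.natDegree = n) (hqd : q.natDegree ≤ n - 1)
    (z : Fin n → ℂ)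
    (hfact : p.map (algebraMap ℝ ℂ)
        - Polynomial.C (Complex.I * l) * q.map (algebraMap ℝ ℂ)
      = ∏ j, (Polynomial.X - Polynomial.C (z j)))
    (hupper : ∀ j, 0 < (z j).im) (hn : 0 < n) :
    ((p.roots.filter (fun x => x < 0)).card = s ∧
     (p.roots.filter (fun x => 0 < x)).card = n - s - 1 ∧
     p.eval 0 = 0)
      ↔ ∑ j, argPV (z j) = Real.pi / 2 + Real.pi * s := by
  classical
  -- (K2) pointwise evaluation
  have hev : ∀ t : ℝ, ((p.eval t : ℝ) : ℂ) - Complex.I * l * ((q.eval t : ℝ) : ℂ) = ∏ j, ((t:ℂ) - z j) := by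
    intro t
    have h := congrArg (Polynomial.eval (t:ℂ)) hfact
    simp only [Polynomial.eval_sub, Polynomial.eval_mul, Polynomial.eval_C,
      Polynomial.eval_prod, Polynomial.eval_map, Polynomial.eval_X] at h
    rw [show ((t:ℝ):ℂ) = algebraMap ℝ ℂ t from rfl] at h
    rw [Polynomial.eval₂_at_apply, Polynomial.eval₂_at_apply] at h
    simpa using h
  -- (K1) per-factor arg formula
  set ψ : ℝ → ℝ := fun t => ∑ j, Real.arctan ((t - (z j).re) / (z j).im) with hψ
  have hker : ∀ (t : ℝ) (j : Fin n),
      Complex.arg ((t:ℂ) - z j) = Real.arctan ((t - (z j).re) / (z j).im) - Real.pi/2 := by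
    intro t j
    have him : ((t:ℂ) - z j).im < 0 := by
      simp [Complex.sub_im, Complex.ofReal_im]
      exact hupper j
    rw [arg_of_im_neg' him]
    simp [Complex.sub_re, Complex.sub_im, Complex.ofReal_re, Complex.ofReal_im]
  -- (K3)
  have hre : ∀ t : ℝ, p.eval t
      = (∏ j, ‖(t:ℂ) - z j‖) * Real.cos (ψ t - n * (Real.pi/2)) := by
    intro t
    have h1 : ∏ j, ((t:ℂ) - z j)
        = ((∏ j, ‖(t:ℂ) - z j‖ : ℝ) : ℂ)
          * Complex.exp ((↑(∑ j, Complex.arg ((t:ℂ) - z j)) : ℂ) * Complex.I) := by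
      rw [Complex.ofReal_prod, Complex.ofReal_sum]
      rw [Finset.sum_mul, Complex.exp_sum, ← Finset.prod_mul_distrib]
      exact Finset.prod_congr rfl fun j _ => (Complex.norm_mul_exp_arg_mul_I _).symm
    have h2 : ∑ j, Complex.arg ((t:ℂ) - z j) = ψ t - n * (Real.pi/2) := by
      rw [hψ]
      simp only [hker t]
      rw [Finset.sum_sub_distrib]
      simp [mul_comm]
    have h3 := congrArg Complex.re (hev t)
    rw [h1, h2] at h3
    rw [Complex.re_ofReal_mul, Complex.exp_ofReal_mul_I_re] at h3
    simpa using h3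
  haveI : Nonempty (Fin n) := Fin.pos_iff_nonempty.mp hn
  set c : ℕ → ℝ := fun k => ((n:ℝ) - 1 - 2*k) * (Real.pi/2) with hc
  -- bounds on ψ
  have hbound : ∀ t : ℝ, -((n:ℝ)*(Real.pi/2)) < ψ t ∧ ψ t < (n:ℝ)*(Real.pi/2) := by
    intro t
    constructor
    · have h1 : ∑ _j : Fin n, -(Real.pi/2) < ψ t :=
        Finset.sum_lt_sum_of_nonempty Finset.univ_nonempty fun j _ =>
          Real.neg_pi_div_two_lt_arctan _
      have h2 : ∑ _j : Fin n, -(Real.pi/2) = -((n:ℝ)*(Real.pi/2)) := by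
        simp [Finset.sum_const, Finset.card_univ]
      linarith
    · have h1 : ψ t < ∑ _j : Fin n, (Real.pi/2) :=
        Finset.sum_lt_sum_of_nonempty Finset.univ_nonempty fun j _ =>
          Real.arctan_lt_pi_div_two _
      have h2 : ∑ _j : Fin n, (Real.pi/2) = (n:ℝ)*(Real.pi/2) := by
        simp [Finset.sum_const, Finset.card_univ]
      linarith
  -- root characterization
  have hzero : ∀ t : ℝ, p.eval t = 0 ↔ ∃ k, k < n ∧ ψ t = c k := by
    intro t
    have hR : 0 < ∏ j, ‖(t:ℂ) - z j‖ := by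
      apply Finset.prod_pos
      intro j _
      apply norm_pos_iff.mpr
      intro h
      have := congrArg Complex.im h
      simp [Complex.sub_im, Complex.ofReal_im] at this
      exact absurd this (ne_of_gt (hupper j))
    rw [hre t]
    constructor
    · intro h
      have hcos : Real.cos (ψ t - n * (Real.pi/2)) = 0 := by
        rcases mul_eq_zero.mp h with h' | h'
        · exact absurd h' hR.ne'
        · exact h'
      rw [Real.cos_eq_zero_iff] at hcos
      obtain ⟨m, hm⟩ := hcos
      have hπ := Real.pi_pos
      obtain ⟨hb1, hb2⟩ := hbound t
      have hm1 : (2*(m:ℝ)+1) * Real.pi / 2 < 0 := by linarith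
      have hm2 : -(2*(n:ℝ)) * Real.pi / 2 < (2*(m:ℝ)+1) * Real.pi / 2 := by linarith
      have hm1' : 2*m+1 < 0 := by
        by_contra hcon
        push_neg at hcon
        have : (0:ℝ) ≤ 2*(m:ℝ)+1 := by exact_mod_cast hcon
        nlinarith
      have hm2' : -(2*(n:ℤ)) < 2*m+1 := by
        by_contra hcon
        push_neg at hcon
        have : (2*(m:ℝ)+1) ≤ -(2*(n:ℝ)) := by exact_mod_cast hcon
        nlinarith
      refine ⟨(-(m+1)).toNat, by omega, ?_⟩
      have hk : (((-(m+1)).toNat : ℤ) : ℝ) = -((m:ℝ)+1) := by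
        rw [Int.toNat_of_nonneg (by omega)]
        push_cast
        ring
      rw [hc]
      show ψ t = ((n:ℝ) - 1 - 2*(((-(m+1)).toNat : ℕ) : ℝ)) * (Real.pi/2)
      have : (((-(m+1)).toNat : ℕ) : ℝ) = -((m:ℝ)+1) := by exact_mod_cast hk
      rw [this]
      linarith
    · rintro ⟨k, hk, hks⟩
      have : Real.cos (ψ t - n * (Real.pi/2)) = 0 := by
        rw [Real.cos_eq_zero_iff]
        refine ⟨-(k:ℤ)-1, ?_⟩
        rw [hks, hc]
        push_cast
        ring
      rw [this, mul_zero]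
  -- strict monotonicity and continuity
  have hmono : StrictMono ψ := by
    intro t t' h
    apply Finset.sum_lt_sum_of_nonempty Finset.univ_nonempty
    intro j _
    apply Real.arctan_strictMono
    apply div_lt_div_of_pos_right ?_ (hupper j)
    linarith
  have hcont : Continuous ψ := by
    apply continuous_finset_sum
    intro j _
    exact Real.continuous_arctan.comp ((continuous_id.sub continuous_const).div_const _)
  -- existence of roots at each level c k
  have hex : ∀ k, k < n → ∃ t : ℝ, ψ t = c k := by
    intro k hk
    have hπ := Real.pi_pos
    have hkr : (k:ℝ) ≤ (n:ℝ) - 1 := by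
      have : (k:ℝ) + 1 ≤ (n:ℝ) := by exact_mod_cast hk
      linarith
    have hck1 : c k < (n:ℝ)*(Real.pi/2) := by
      rw [hc]; show ((n:ℝ) - 1 - 2*k) * (Real.pi/2) < (n:ℝ)*(Real.pi/2)
      have : (0:ℝ) ≤ (k:ℝ) := Nat.cast_nonneg k
      nlinarith
    have hck2 : -((n:ℝ)*(Real.pi/2)) < c k := by
      rw [hc]; show -((n:ℝ)*(Real.pi/2)) < ((n:ℝ) - 1 - 2*k) * (Real.pi/2)
      nlinarith
    have htop : Filter.Tendsto ψ Filter.atTop (nhds ((n:ℝ)*(Real.pi/2))) := by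
      have h2 : ((n:ℝ)*(Real.pi/2)) = ∑ _j : Fin n, (Real.pi/2) := by
        simp [Finset.sum_const, Finset.card_univ]
      rw [h2]
      apply tendsto_finset_sum
      intro j _
      have hdiv : Filter.Tendsto (fun t : ℝ => (t - (z j).re) / (z j).im)
          Filter.atTop Filter.atTop :=
        (Filter.tendsto_atTop_add_const_right _ _ Filter.tendsto_id).atTop_div_const (hupper j)
      exact (tendsto_nhds_of_tendsto_nhdsWithin Real.tendsto_arctan_atTop).comp hdiv
    have hbot : Filter.Tendsto ψ Filter.atBot (nhds (-((n:ℝ)*(Real.pi/2)))) := by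
      have h2 : -((n:ℝ)*(Real.pi/2)) = ∑ _j : Fin n, -(Real.pi/2) := by
        simp [Finset.sum_const, Finset.card_univ]
      rw [h2]
      apply tendsto_finset_sum
      intro j _
      have hdiv : Filter.Tendsto (fun t : ℝ => (t - (z j).re) / (z j).im)
          Filter.atBot Filter.atBot :=
        (Filter.tendsto_atBot_add_const_right _ _ Filter.tendsto_id).atBot_div_const (hupper j)
      exact (tendsto_nhds_of_tendsto_nhdsWithin Real.tendsto_arctan_atBot).comp hdiv
    obtain ⟨t2, ht2⟩ := (htop.eventually (eventually_gt_nhds hck1)).exists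
    obtain ⟨t1, ht1⟩ := (hbot.eventually (eventually_lt_nhds hck2)).exists
    have h12 : t1 < t2 := by
      by_contra hcon
      push_neg at hcon
      have := hmono.le_iff_le.mpr hcon
      linarith
    obtain ⟨u, _, hu⟩ := intermediate_value_Icc h12.le hcont.continuousOn
      (Set.mem_Icc.mpr ⟨ht1.le, ht2.le⟩)
    exact ⟨u, hu⟩
  -- choose roots
  obtain ⟨T, hT⟩ : ∃ T : ℕ → ℝ, ∀ k, k < n → ψ (T k) = c k := by
    choose f hf using hex
    exact ⟨fun k => if h : k < n then f k h else 0,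
      fun k h => by simp only [dif_pos h]; exact hf k h⟩
  have hcanti : StrictAnti c := by
    intro a b h
    have : (a:ℝ) < b := by exact_mod_cast h
    have hπ := Real.pi_pos
    show ((n:ℝ) - 1 - 2*b) * (Real.pi/2) < ((n:ℝ) - 1 - 2*a) * (Real.pi/2)
    nlinarith
  have hTinj : ∀ k k', k < n → k' < n → T k = T k' → k = k' := by
    intro k k' hk hk' h
    have : c k = c k' := by rw [← hT k hk, ← hT k' hk', h]
    exact hcanti.injective this
  have hpne : p ≠ 0 := hp.ne_zero
  have hroots : p.roots = (Multiset.range n).map T := by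
    have hnd : ((Multiset.range n).map T).Nodup :=
      (Multiset.nodup_range n).map_on (fun k hk k' hk' h =>
        hTinj k k' (Multiset.mem_range.mp hk) (Multiset.mem_range.mp hk') h)
    have hle : (Multiset.range n).map T ≤ p.roots := by
      rw [Multiset.le_iff_subset hnd]
      intro x hx
      obtain ⟨k, hk, rfl⟩ := Multiset.mem_map.mp hx
      rw [Multiset.mem_range] at hk
      rw [Polynomial.mem_roots hpne]
      exact (hzero (T k)).mpr ⟨k, hk, hT k hk⟩
    refine (Multiset.eq_of_le_of_card_le hle ?_).symm
    rw [Multiset.card_map, Multiset.card_range, ← hpd]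
    exact p.card_roots'
  -- value of ψ at 0
  set S := ∑ j, Complex.arg (z j) with hS
  have hψ0 : ψ 0 = S - n*(Real.pi/2) := by
    have harg : ∀ j : Fin n,
        Real.arctan (((0:ℝ) - (z j).re) / (z j).im) = Complex.arg (z j) - Real.pi/2 := by
      intro j
      have h1 := hker 0 j
      have h2 : Complex.arg (((0:ℝ):ℂ) - z j) = Complex.arg (z j) - Real.pi := by
        have he : ((0:ℝ):ℂ) - z j = -(z j) := by push_cast; ring
        rw [he]
        exact Complex.arg_neg_eq_arg_sub_pi_of_im_pos (hupper j)
      rw [h2] at h1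
      linarith
    rw [hψ]
    calc ∑ j, Real.arctan (((0:ℝ) - (z j).re)/(z j).im)
        = ∑ j : Fin n, (Complex.arg (z j) - Real.pi/2) :=
          Finset.sum_congr rfl (fun j _ => harg j)
      _ = S - n*(Real.pi/2) := by
          rw [Finset.sum_sub_distrib]
          simp [hS, Finset.sum_const, Finset.card_univ]
  -- counting lemma
  have hfc : ∀ (pr : ℝ → Prop) (inst : DecidablePred pr),
      (p.roots.filter pr).card = ((Finset.range n).filter (fun k => pr (T k))).card := by
    intro pr inst
    rw [hroots, Multiset.filter_map, Multiset.card_map]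
    rfl
  have key : ∀ k₀, k₀ < n → ψ 0 = c k₀ →
      (p.roots.filter (fun x => x < 0)).card = n - (k₀+1) ∧
      (p.roots.filter (fun x => 0 < x)).card = k₀ := by
    intro k₀ hk₀n hk0
    have hTlt : ∀ k, k < n → (T k < 0 ↔ k₀ < k) := by
      intro k hk
      have h1 : ψ (T k) < ψ 0 ↔ T k < 0 := hmono.lt_iff_lt
      rw [hT k hk, hk0] at h1
      rw [← h1, StrictAnti.lt_iff_gt hcanti]
    have hTgt : ∀ k, k < n → (0 < T k ↔ k < k₀) := by
      intro k hk
      have h1 : ψ 0 < ψ (T k) ↔ 0 < T k := hmono.lt_iff_lt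
      rw [hT k hk, hk0] at h1
      rw [← h1, StrictAnti.lt_iff_gt hcanti]
    constructor
    · rw [hfc _ _]
      have he : (Finset.range n).filter (fun k => T k < 0)
          = Finset.Ico (k₀+1) n := by
        ext a
        simp only [Finset.mem_filter, Finset.mem_range, Finset.mem_Ico]
        constructor
        · rintro ⟨ha, hb⟩; exact ⟨(hTlt a ha).mp hb, ha⟩
        · rintro ⟨ha, hb⟩; exact ⟨hb, (hTlt a hb).mpr ha⟩
      rw [he, Nat.card_Ico]
    · rw [hfc _ _]
      have he : (Finset.range n).filter (fun k => 0 < T k)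
          = Finset.range k₀ := by
        ext a
        simp only [Finset.mem_filter, Finset.mem_range]
        constructor
        · rintro ⟨ha, hb⟩; exact (hTgt a ha).mp hb
        · intro ha; exact ⟨lt_trans ha hk₀n, (hTgt a (lt_trans ha hk₀n)).mpr ha⟩
      rw [he, Finset.card_range]
  -- sum of principal arguments
  have hargPV : ∀ j, argPV (z j) = Complex.arg (z j) := by
    intro j
    rw [argPV, if_neg]
    intro h
    rw [Complex.arg_eq_pi_iff] at h
    exact absurd h.2 (ne_of_gt (hupper j))
  have hsum : ∑ j, argPV (z j) = S := Finset.sum_congr rfl (fun j _ => hargPV j)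
  rw [hsum]
  have hπ := Real.pi_pos
  -- bounds on S
  have hSlt : S < n * Real.pi := by
    have h1 : S < ∑ _j : Fin n, Real.pi :=
      Finset.sum_lt_sum_of_nonempty Finset.univ_nonempty fun j _ =>
        Complex.arg_lt_pi_iff.mpr (Or.inr (ne_of_gt (hupper j)))
    have h2 : ∑ _j : Fin n, Real.pi = (n:ℝ)*Real.pi := by
      simp [Finset.sum_const, Finset.card_univ]
    linarith
  constructor
  · rintro ⟨hneg, hpos, h0⟩
    obtain ⟨k₀, hk₀n, hk0⟩ := (hzero 0).mp h0
    obtain ⟨hc1, hc2⟩ := key k₀ hk₀n hk0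
    rw [hc1] at hneg
    have hk₀r : (k₀:ℝ) = (n:ℝ) - 1 - s := by
      have h1 : k₀ + s = n - 1 := by omega
      have h2 : ((k₀ + s : ℕ):ℝ) = ((n - 1 : ℕ):ℝ) := by rw [h1]
      have h3 : ((n - 1 : ℕ):ℝ) = (n:ℝ) - 1 := by
        rw [Nat.cast_sub hn]; simp
      push_cast at h2
      linarith
    have hck : c k₀ = S - n*(Real.pi/2) := by rw [← hk0, hψ0]
    have hcc : c k₀ = ((n:ℝ) - 1 - 2*k₀) * (Real.pi/2) := rfl
    rw [hcc, hk₀r] at hck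
    linarith
  · intro hRHS
    have hsle : s + 1 ≤ n := by
      by_contra hcon
      push_neg at hcon
      have : (n:ℝ) ≤ s := by exact_mod_cast Nat.lt_succ_iff.mp hcon
      nlinarith
    set k₀ := n - 1 - s with hk₀
    have hk₀n : k₀ < n := by omega
    have hk₀r : (k₀:ℝ) = (n:ℝ) - 1 - s := by
      have h1 : ((k₀:ℕ):ℝ) = ((n - 1 - s : ℕ):ℝ) := by rw [hk₀]
      have h2 : n - 1 - s + s + 1 = n := by omega
      have h3 : ((n - 1 - s + s + 1 : ℕ):ℝ) = (n:ℝ) := by rw [h2]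
      push_cast at h1 h3 ⊢
      linarith
    have hk0 : ψ 0 = c k₀ := by
      rw [hψ0]
      have hcc : c k₀ = ((n:ℝ) - 1 - 2*k₀) * (Real.pi/2) := rfl
      rw [hcc, hk₀r]
      linarith
    obtain ⟨hc1, hc2⟩ := key k₀ hk₀n hk0
    refine ⟨?_, ?_, (hzero 0).mpr ⟨k₀, hk₀n, hk0⟩⟩
    · rw [hc1]; omega
    · rw [hc2]; omega

/-- Let `h = p - i l q = ∏ⱼ (z - zⱼ)` with `p`, `q` monic real, `deg p = n`,
`deg q ≤ n - 1`, `l ∈ ℝ`, and all zeros `zⱼ` of `h` in the open upper half-plane.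
Then `p` has exactly `s` negative zeros, exactly `n - s - 1` positive zeros, and a zero
at `t = 0`, if and only if `∑ⱼ Arg zⱼ = π/2 + π s`. -/
theorem zero_root_iff_arg_sum (n s : ℕ) (p q : Polynomial ℝ) (l : ℝ)
    (hp : p.Monic) (hq : q.Monic) (hpd : p.natDegree = n) (hqd : q.natDegree ≤ n - 1)
    (z : Fin n → ℂ)
    (hfact : p.map (algebraMap ℝ ℂ)
        - Polynomial.C (Complex.I * l) * q.map (algebraMap ℝ ℂ)
      = ∏ j, (Polynomial.X - Polynomial.C (z j)))
    (hupper : ∀ j, 0 < (z j).im) :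
    ((p.roots.filter (fun x => x < 0)).card = s ∧
     (p.roots.filter (fun x => 0 < x)).card = n - s - 1 ∧
     p.eval 0 = 0)
      ↔ ∑ j, argPV (z j) = Real.pi / 2 + Real.pi * s := by
  rcases Nat.eq_zero_or_pos n with hn | hn
  · subst hn
    have hp1 : p = 1 := hp.natDegree_eq_zero.mp hpd
    constructor
    · rintro ⟨-, -, h0⟩
      rw [hp1] at h0
      simp at h0
    · intro h
      rw [Finset.univ_eq_empty, Finset.sum_empty] at h
      have hπ := Real.pi_pos
      have hs : (0:ℝ) ≤ s := Nat.cast_nonneg s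
      nlinarith
  · exact zero_root_iff_arg_sum_aux n s p q l hp hq hpd hqd z hfact hupper hn
end

section
/- Let α be a complex number with Im α > 0 and let z_1, ..., z_n be non-real complex numbers satisfying Σ_{j=1}^n Arg_{[0,π)} z_j = Arg α. Then for the monic polynomial h(z) = ∏_{j=1}^n (z - z_j) there exists a unique pair of monic real polynomials p and q, with deg p = n and deg q = n - 1 and with strictly interlacing zeros, such that h(z) = α p(z) + (1 - α) z q(z). -/
/-- `Arg_{[0,π)} z`: equals `Arg z` if `Im z > 0`, `0` if `z` is real, and
`π + Arg z` if `Im z < 0`. -/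
noncomputable def arg0pi (z : ℂ) : ℝ :=
  if 0 < z.im then Complex.arg z
  else if z.im < 0 then Real.pi + Complex.arg z
  else 0

/-- The zeros of the real polynomials `p` (of degree `n`) and `q` (of degree `n - 1`)
strictly interlace. -/
def StrictInterlace (n : ℕ) (p q : Polynomial ℝ) : Prop :=
  ∃ (lam : Fin n → ℝ) (mu : Fin (n - 1) → ℝ),
    StrictMono lam ∧ StrictMono mu ∧
    p = ∏ i, (Polynomial.X - Polynomial.C (lam i)) ∧
    q = ∏ i, (Polynomial.X - Polynomial.C (mu i)) ∧
    ∀ i : Fin (n - 1),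
      lam ⟨i.1, by have h := i.2; omega⟩ < mu i ∧
        mu i < lam ⟨i.1 + 1, by have h := i.2; omega⟩


open Polynomial Filter Set Complex Real

noncomputable def imPoly (P : Polynomial ℂ) : Polynomial ℝ :=
  ⟨⟨P.toFinsupp.coeff.mapRange Complex.im Complex.zero_im⟩⟩

@[simp] lemma imPoly_coeff (P : Polynomial ℂ) (k : ℕ) :
    (imPoly P).coeff k = (P.coeff k).im := rfl

lemma imPoly_natDegree_le (P : Polynomial ℂ) : (imPoly P).natDegree ≤ P.natDegree := by
  apply Polynomial.natDegree_le_iff_coeff_eq_zero.2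
  intro m hm
  simp [Polynomial.coeff_eq_zero_of_natDegree_lt hm]

lemma imPoly_eval (P : Polynomial ℂ) (x : ℝ) :
    (imPoly P).eval x = (P.eval (x : ℂ)).im := by
  rw [Polynomial.eval_eq_sum_range' (Nat.lt_succ_of_le (imPoly_natDegree_le P)),
    Polynomial.eval_eq_sum_range' (Nat.lt_succ_self P.natDegree), Complex.im_sum]
  refine Finset.sum_congr rfl fun k _ => ?_
  simp [Complex.mul_im, ← Complex.ofReal_pow]
open Polynomial Filter Set Complex

lemma recon (α : ℂ) (hb : α.im ≠ 0) (c : ℂ) :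
    α * ((((1 - (starRingEnd ℂ) α) / (α.im : ℂ)) * c).im : ℂ)
      + (1 - α) * (((-(starRingEnd ℂ) α / (α.im : ℂ)) * c).im : ℂ) = c := by
  apply Complex.ext <;>
    simp [Complex.div_im, Complex.div_re, Complex.mul_im, Complex.mul_re, Complex.sub_im,
      Complex.sub_re, Complex.add_im, Complex.add_re, Complex.normSq_ofReal] <;>
    field_simp <;> ring

lemma realComb_zero (α : ℂ) (hb : α.im ≠ 0) (x y : ℝ)
    (h : α * (x : ℂ) + (1 - α) * (y : ℂ) = 0) : x = 0 ∧ y = 0 := by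
  have him : α.im * x - α.im * y = 0 := by
    have := congrArg Complex.im h
    simpa [Complex.add_im, Complex.mul_im, Complex.sub_im, Complex.sub_re, sub_eq_add_neg] using this
  have hre : α.re * x + (1 - α.re) * y = 0 := by
    have := congrArg Complex.re h
    simpa [Complex.add_re, Complex.mul_re, Complex.sub_im, Complex.sub_re] using this
  have hxy : x = y := mul_left_cancel₀ hb (sub_eq_zero.mp him)
  subst hxy
  have hx : x = 0 := by linear_combination hre
  exact ⟨hx, hx⟩
open Polynomial Filter Set

lemma monic_eq_prod_of_roots {p : Polynomial ℝ} (hp : p.Monic) {n : ℕ}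
    (hd : p.natDegree = n) (f : Fin n → ℝ) (hinj : Function.Injective f)
    (hroot : ∀ i, p.eval (f i) = 0) :
    p = ∏ i, (Polynomial.X - Polynomial.C (f i)) := by
  classical
  have hp0 : p ≠ 0 := hp.ne_zero
  set M : Multiset ℝ := Finset.univ.val.map f with hM
  have hMnodup : M.Nodup := Multiset.Nodup.map hinj Finset.univ.nodup
  have hle : M ≤ p.roots := by
    rw [Multiset.le_iff_count]
    intro a
    by_cases ha : a ∈ M
    · have h1 : M.count a = 1 := Multiset.count_eq_one_of_mem hMnodup ha
      obtain ⟨i, _, rfl⟩ := Multiset.mem_map.mp ha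
      have : f i ∈ p.roots := by
        rw [Polynomial.mem_roots hp0]
        exact hroot i
      rw [h1]
      exact Multiset.one_le_count_iff_mem.mpr this
    · simp [Multiset.count_eq_zero_of_notMem ha]
  have hcard : Multiset.card M = n := by simp [hM]
  have hroots_card : Multiset.card p.roots = p.natDegree := by
    refine le_antisymm (Polynomial.card_roots' p) ?_
    rw [hd, ← hcard]
    exact Multiset.card_le_card hle
  have hMeq : p.roots = M := by
    refine (Multiset.eq_of_le_of_card_le hle ?_).symm
    rw [hcard, hroots_card, hd]
  have := Polynomial.prod_multiset_X_sub_C_of_monic_of_roots_card_eq hp hroots_card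
  rw [hMeq, hM] at this
  rw [← this, Multiset.map_map, Finset.prod_eq_multiset_prod]
  rfl
open Polynomial Filter Set Complex Real

noncomputable def psi (w : ℂ) (x : ℝ) : ℝ :=
  if 0 < w.im then Complex.arg ((x : ℂ) - w) + Real.pi else Complex.arg ((x : ℂ) - w)

lemma sub_im' (w : ℂ) (x : ℝ) : ((x : ℂ) - w).im = -w.im := by simp
lemma sub_re' (w : ℂ) (x : ℝ) : ((x : ℂ) - w).re = x - w.re := by simp

lemma psi_pos {w : ℂ} (hw : w.im ≠ 0) (x : ℝ) : 0 < psi w x := by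
  unfold psi
  rcases lt_or_gt_of_ne hw with h | h
  · simp only [h.not_gt, if_false]
    have : 0 < ((x : ℂ) - w).im := by rw [sub_im']; linarith
    rcases Complex.arg_nonneg_iff.mpr this.le |>.lt_or_eq with h2 | h2
    · exact h2
    · exfalso
      have := Complex.arg_eq_zero_iff.mp h2.symm
      rw [sub_im'] at this; linarith [this.2]
  · simp only [h, if_true]
    have him : ((x : ℂ) - w).im < 0 := by rw [sub_im']; linarith
    have := Complex.neg_pi_lt_arg ((x : ℂ) - w)
    linarith
lemma psi_lt_pi {w : ℂ} (hw : w.im ≠ 0) (x : ℝ) : psi w x < Real.pi := by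
  unfold psi
  rcases lt_or_gt_of_ne hw with h | h
  · simp only [h.not_gt, if_false]
    have him : ((x : ℂ) - w).im ≠ 0 := by rw [sub_im']; intro hc; apply h.ne; linarith
    rcases (Complex.arg_le_pi ((x : ℂ) - w)).lt_or_eq with h2 | h2
    · exact h2
    · exact absurd (Complex.arg_eq_pi_iff.mp h2).2 him
  · simp only [h, if_true]
    have him : ((x : ℂ) - w).im < 0 := by rw [sub_im']; linarith
    have := Complex.arg_neg_iff.mpr him
    linarith

lemma continuous_psi {w : ℂ} (hw : w.im ≠ 0) : Continuous (psi w) := by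
  have h1 : Continuous fun x : ℝ => Complex.arg ((x : ℂ) - w) := by
    rw [continuous_iff_continuousAt]
    intro x
    apply (Complex.continuousAt_arg ?_).comp
    · exact (Complex.continuous_ofReal.sub continuous_const).continuousAt
    · rw [Complex.mem_slitPlane_iff]
      right; rw [sub_im']; simpa using hw
  unfold psi
  split_ifs
  · exact h1.add continuous_const
  · exact h1

lemma tendsto_abs_sub_atTop (w : ℂ) :
    Tendsto (fun x : ℝ => ‖(x : ℂ) - w‖) atTop atTop := by
  apply tendsto_atTop_mono (fun x => ?_) (tendsto_atTop_add_const_right _ (-w.re) tendsto_id)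
  calc x + -w.re ≤ |x - w.re| := by rw [← sub_eq_add_neg]; exact le_abs_self _
  _ = |((x : ℂ) - w).re| := by rw [sub_re']
  _ ≤ ‖(x : ℂ) - w‖ := Complex.abs_re_le_norm _

lemma tendsto_abs_sub_atBot (w : ℂ) :
    Tendsto (fun x : ℝ => ‖(x : ℂ) - w‖) atBot atTop := by
  apply tendsto_atTop_mono (fun x => ?_) (tendsto_neg_atBot_atTop.comp
    (tendsto_atBot_add_const_right _ (-w.re) tendsto_id))
  show -(x + -w.re) ≤ _
  calc -(x + -w.re) ≤ |x - w.re| := by rw [← sub_eq_add_neg]; exact neg_le_abs _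
  _ = |((x : ℂ) - w).re| := by rw [sub_re']
  _ ≤ ‖(x : ℂ) - w‖ := Complex.abs_re_le_norm _

lemma tendsto_ratio {w : ℂ} {l : Filter ℝ} (c : ℝ)
    (h : Tendsto (fun x : ℝ => ‖(x : ℂ) - w‖) l atTop) :
    Tendsto (fun x : ℝ => Real.arcsin (c / ‖(x : ℂ) - w‖)) l (nhds 0) := by
  have h0 : Tendsto (fun x : ℝ => c / ‖(x : ℂ) - w‖) l (nhds 0) :=
    Tendsto.div_atTop tendsto_const_nhds h
  have := (Real.continuous_arcsin.tendsto 0).comp h0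
  rwa [Real.arcsin_zero] at this

lemma tendsto_psi_atTop {w : ℂ} (hw : w.im ≠ 0) :
    Tendsto (psi w) atTop (nhds (if 0 < w.im then Real.pi else 0)) := by
  have key : Tendsto (fun x : ℝ => Complex.arg ((x : ℂ) - w)) atTop (nhds 0) := by
    apply Tendsto.congr' ?_ (tendsto_ratio (-w.im) (tendsto_abs_sub_atTop w))
    filter_upwards [eventually_ge_atTop w.re] with x hx
    rw [Complex.arg_of_re_nonneg (by rw [sub_re']; linarith)]
    rw [sub_im']
  unfold psi
  split_ifs with h
  · simpa using key.add_const Real.pi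
  · exact key

lemma tendsto_psi_atBot {w : ℂ} (hw : w.im ≠ 0) :
    Tendsto (psi w) atBot (nhds (if 0 < w.im then 0 else Real.pi)) := by
  rcases lt_or_gt_of_ne hw with hneg | hpos
  · have key : Tendsto (fun x : ℝ => Complex.arg ((x : ℂ) - w)) atBot (nhds Real.pi) := by
      rw [show Real.pi = 0 + Real.pi by ring]
      apply Tendsto.congr' ?_ ((tendsto_ratio w.im (tendsto_abs_sub_atBot w)).add_const Real.pi)
      filter_upwards [eventually_le_atBot (w.re - 1)] with x hx
      rw [Complex.arg_of_re_neg_of_im_nonneg (by rw [sub_re']; linarith)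
        (by rw [sub_im']; linarith)]
      simp
    unfold psi
    simp only [hneg.not_gt, if_false]
    exact key
  · have key : Tendsto (fun x : ℝ => Complex.arg ((x : ℂ) - w)) atBot (nhds (-Real.pi)) := by
      rw [show -Real.pi = 0 - Real.pi by ring]
      apply Tendsto.congr' ?_ ((tendsto_ratio w.im (tendsto_abs_sub_atBot w)).sub_const Real.pi)
      · filter_upwards [eventually_le_atBot (w.re - 1)] with x hx
        rw [Complex.arg_of_re_neg_of_im_neg (by rw [sub_re']; linarith)
          (by rw [sub_im']; linarith)]
        simp
    unfold psi
    simp only [hpos, if_true]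
    have := key.add_const Real.pi
    simpa using this
open Polynomial Filter Set Complex Real

noncomputable def eps (w : ℂ) : ℝ := if 0 < w.im then (-1 : ℝ) else 1

lemma conj_polar (v : ℂ) : (starRingEnd ℂ) v
    = ↑(‖v‖) * Complex.exp (-(↑(Complex.arg v) * Complex.I)) := by
  nth_rewrite 1 [← Complex.norm_mul_exp_arg_mul_I v]
  rw [map_mul, Complex.conj_ofReal, ← Complex.exp_conj]
  congr 1
  simp

lemma factor_psi {w : ℂ} (x : ℝ) :
    (x : ℂ) - w = ↑(eps w * ‖(x : ℂ) - w‖) * Complex.exp (↑(psi w x) * Complex.I) := by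
  have h := Complex.norm_mul_exp_arg_mul_I ((x : ℂ) - w)
  unfold eps psi
  split_ifs with hw
  · have h2 : Complex.exp (↑(Complex.arg ((x : ℂ) - w) + Real.pi) * Complex.I)
        = -Complex.exp (↑(Complex.arg ((x : ℂ) - w)) * Complex.I) := by
      push_cast
      rw [add_mul, Complex.exp_add, Complex.exp_pi_mul_I]
      ring
    rw [h2]
    nth_rewrite 1 [← h]
    push_cast
    ring
  · nth_rewrite 1 [← h]
    push_cast
    ring

lemma im_conj_mul_exp (u : ℂ) (θ : ℝ) :
    ((starRingEnd ℂ) u * Complex.exp (↑θ * Complex.I)).im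
      = ‖u‖ * Real.sin (θ - Complex.arg u) := by
  rw [conj_polar, mul_assoc, ← Complex.exp_add,
    show -(↑(Complex.arg u) * Complex.I) + ↑θ * Complex.I
      = ↑(θ - Complex.arg u) * Complex.I by push_cast; ring]
  rw [Complex.mul_im, Complex.exp_ofReal_mul_I_im, Complex.exp_ofReal_mul_I_re]
  simp

lemma mul_conj_polar (u v : ℂ) : u * (starRingEnd ℂ) v
    = ↑(‖u‖ * ‖v‖)
      * Complex.exp (↑(Complex.arg u - Complex.arg v) * Complex.I) := by
  nth_rewrite 1 [← Complex.norm_mul_exp_arg_mul_I u]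
  rw [conj_polar,
    show (↑(Complex.arg u - Complex.arg v) : ℂ) * Complex.I
      = ↑(Complex.arg u) * Complex.I + -(↑(Complex.arg v) * Complex.I) by push_cast; ring,
    Complex.exp_add]
  push_cast
  ring

lemma level_facts (α : ℂ) (hα : 0 < α.im) :
    0 < Complex.arg α ∧ Complex.arg α < Real.pi ∧
    -Real.pi < Complex.arg (1 - α) ∧ Complex.arg (1 - α) < 0 ∧
    Complex.arg α - Complex.arg (1 - α) < Real.pi ∧
    0 < Real.sin (Complex.arg α - Complex.arg (1 - α)) := by
  have hα0 : α ≠ 0 := fun h => by simp [h] at hα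
  have h1α : (1 - α).im < 0 := by simp [Complex.sub_im]; linarith
  have h1α0 : (1 - α) ≠ 0 := fun h => by rw [h] at h1α; simp at h1α
  have hγpos : 0 < Complex.arg α := by
    rcases (Complex.arg_nonneg_iff.mpr hα.le).lt_or_eq with h | h
    · exact h
    · exact absurd (Complex.arg_eq_zero_iff.mp h.symm).2 hα.ne'
  have hγlt : Complex.arg α < Real.pi := by
    rcases (Complex.arg_le_pi α).lt_or_eq with h | h
    · exact h
    · exact absurd (Complex.arg_eq_pi_iff.mp h).2 hα.ne'
  have hβneg : Complex.arg (1 - α) < 0 := Complex.arg_neg_iff.mpr h1α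
  have hβgt : -Real.pi < Complex.arg (1 - α) := Complex.neg_pi_lt_arg _
  have hsin : 0 < Real.sin (Complex.arg α - Complex.arg (1 - α)) := by
    have hc : (α * (starRingEnd ℂ) (1 - α)).im = α.im := by
      simp [Complex.mul_im, Complex.sub_re, Complex.sub_im]; ring
    have him : ‖α‖ * ‖1 - α‖
        * Real.sin (Complex.arg α - Complex.arg (1 - α)) = α.im := by
      rw [← hc, mul_conj_polar, Complex.mul_im, Complex.exp_ofReal_mul_I_im,
        Complex.exp_ofReal_mul_I_re]
      simp
    have hpos : 0 < ‖α‖ * ‖1 - α‖ :=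
      mul_pos (norm_pos_iff.mpr hα0) (norm_pos_iff.mpr h1α0)
    nlinarith [him, hα]
  have hlt : Complex.arg α - Complex.arg (1 - α) < Real.pi := by
    by_contra hge
    push_neg at hge
    have h2 : Real.sin (Complex.arg α - Complex.arg (1 - α)) ≤ 0 := by
      rw [show Complex.arg α - Complex.arg (1 - α)
          = (Complex.arg α - Complex.arg (1 - α) - Real.pi) + Real.pi by ring, Real.sin_add_pi]
      have h3 : 0 ≤ Real.sin (Complex.arg α - Complex.arg (1 - α) - Real.pi) := by
        apply Real.sin_nonneg_of_nonneg_of_le_pi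
        · linarith
        · have := Real.pi_pos; linarith [hγlt, hβgt]
      linarith
    linarith
  exact ⟨hγpos, hγlt, hβgt, hβneg, hlt, hsin⟩

lemma exists_root_between {f : Polynomial ℝ} {a c : ℝ} (hac : a < c)
    (h : f.eval a * f.eval c < 0) : ∃ t, a < t ∧ t < c ∧ f.eval t = 0 := by
  have hcont : ContinuousOn (fun x => f.eval x) (Icc a c) := f.continuousOn
  rcases mul_neg_iff.mp h with ⟨hpos, hneg⟩ | ⟨hneg, hpos⟩
  · obtain ⟨t, htmem, htval⟩ := intermediate_value_Ioo' hac.le hcont (mem_Ioo.mpr ⟨hneg, hpos⟩)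
    exact ⟨t, htmem.1, htmem.2, htval⟩
  · obtain ⟨t, htmem, htval⟩ := intermediate_value_Ioo hac.le hcont (mem_Ioo.mpr ⟨hneg, hpos⟩)
    exact ⟨t, htmem.1, htmem.2, htval⟩

set_option maxHeartbeats 2000000 in
theorem exists_pair (n : ℕ) (hn : 0 < n) (α : ℂ) (hα : 0 < α.im)
    (z : Fin n → ℂ) (hz : ∀ j, (z j).im ≠ 0)
    (hsum : ∑ j, arg0pi (z j) = Complex.arg α) :
    ∃ P Q : Polynomial ℝ, P.Monic ∧ Q.Monic ∧ P.natDegree = n ∧ Q.natDegree = n - 1 ∧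
      (∃ (lam : Fin n → ℝ) (mu : Fin (n - 1) → ℝ),
        StrictMono lam ∧ StrictMono mu ∧
        P = ∏ i, (Polynomial.X - Polynomial.C (lam i)) ∧
        Q = ∏ i, (Polynomial.X - Polynomial.C (mu i)) ∧
        ∀ i : Fin (n - 1),
          lam ⟨i.1, by omega⟩ < mu i ∧ mu i < lam ⟨i.1 + 1, by omega⟩) ∧
      (∏ j, (Polynomial.X - Polynomial.C (z j)))
        = Polynomial.C α * P.map (algebraMap ℝ ℂ)
          + Polynomial.C (1 - α) * (Polynomial.X * Q.map (algebraMap ℝ ℂ)) := by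
  classical
  set b : ℝ := α.im with hbdef
  have hb : b ≠ 0 := ne_of_gt hα
  set γ : ℝ := Complex.arg α with hγdef
  set β : ℝ := Complex.arg (1 - α) with hβdef
  obtain ⟨hγpos, hγlt, hβgt, hβneg, hγβlt, hsinpos⟩ := level_facts α hα
  have hπ := Real.pi_pos
  set H : Polynomial ℂ := ∏ j, (Polynomial.X - Polynomial.C (z j)) with hHdef
  have hHmonic : H.Monic := monic_prod_of_monic _ _ fun j _ => monic_X_sub_C _
  have hHdeg : H.natDegree = n := by
    rw [hHdef, natDegree_prod_of_monic _ _ fun j _ => monic_X_sub_C _]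
    simp
  set P : Polynomial ℝ :=
    imPoly (Polynomial.C ((1 - (starRingEnd ℂ) α) / (b : ℂ)) * H) with hPdef
  set S : Polynomial ℝ :=
    imPoly (Polynomial.C (-(starRingEnd ℂ) α / (b : ℂ)) * H) with hSdef
  have hPcoeff : ∀ k, P.coeff k = (((1 - (starRingEnd ℂ) α) / (b : ℂ)) * H.coeff k).im := by
    intro k; rw [hPdef, imPoly_coeff, Polynomial.coeff_C_mul]
  have hScoeff : ∀ k, S.coeff k = ((-(starRingEnd ℂ) α / (b : ℂ)) * H.coeff k).im := by
    intro k; rw [hSdef, imPoly_coeff, Polynomial.coeff_C_mul]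
  -- the fundamental reconstruction identity
  have hkey : H = Polynomial.C α * P.map (algebraMap ℝ ℂ)
      + Polynomial.C (1 - α) * S.map (algebraMap ℝ ℂ) := by
    ext k
    rw [Polynomial.coeff_add, Polynomial.coeff_C_mul, Polynomial.coeff_C_mul,
      Polynomial.coeff_map, Polynomial.coeff_map, hPcoeff, hScoeff]
    have := recon α hb (H.coeff k)
    simpa [Complex.coe_algebraMap] using this.symm
  -- degrees and monicity
  have hHn : H.coeff n = 1 := by
    have := hHmonic.coeff_natDegree
    rwa [hHdeg] at this
  have hHhigh : ∀ k, n < k → H.coeff k = 0 := fun k hk =>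
    Polynomial.coeff_eq_zero_of_natDegree_lt (hHdeg ▸ hk)
  have hPtop : P.coeff n = 1 := by
    rw [hPcoeff, hHn, mul_one, div_ofReal_im]
    simp [Complex.sub_im, Complex.conj_im, hb]
    rw [← hbdef]; exact div_self hb
  have hPhigh : ∀ k, n < k → P.coeff k = 0 := by
    intro k hk; rw [hPcoeff, hHhigh k hk, mul_zero, Complex.zero_im]
  have hStop : S.coeff n = 1 := by
    rw [hScoeff, hHn, mul_one, div_ofReal_im]
    simp [Complex.neg_im, Complex.conj_im, hb]
    rw [← hbdef]; exact div_self hb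
  have hShigh : ∀ k, n < k → S.coeff k = 0 := by
    intro k hk; rw [hScoeff, hHhigh k hk, mul_zero, Complex.zero_im]
  have hPdeg : P.natDegree = n := by
    refine le_antisymm (Polynomial.natDegree_le_iff_coeff_eq_zero.mpr hPhigh) ?_
    exact Polynomial.le_natDegree_of_ne_zero (by rw [hPtop]; exact one_ne_zero)
  have hPmonic : P.Monic := by
    rw [Polynomial.Monic, Polynomial.leadingCoeff, hPdeg, hPtop]
  have hSdeg : S.natDegree = n := by
    refine le_antisymm (Polynomial.natDegree_le_iff_coeff_eq_zero.mpr hShigh) ?_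
    exact Polynomial.le_natDegree_of_ne_zero (by rw [hStop]; exact one_ne_zero)
  have hSmonic : S.Monic := by
    rw [Polynomial.Monic, Polynomial.leadingCoeff, hSdeg, hStop]
  -- the constant coefficient of S vanishes
  have hα0 : α ≠ 0 := by
    intro h
    have h2 : (0 : ℝ) < α.im := hα
    rw [h] at h2
    simp at h2
  have habsα : ‖α‖ ≠ 0 := norm_ne_zero_iff.mpr hα0
  have hprodz : ∃ r : ℝ, r ≠ 0 ∧ ∏ j, z j = (r : ℂ) * α := by
    set epsz : Fin n → ℝ := fun j => if 0 < (z j).im then 1 else -1 with hepszdef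
    have hzj : ∀ j, z j = ((epsz j * ‖z j‖ : ℝ) : ℂ)
        * Complex.exp ((arg0pi (z j) : ℂ) * Complex.I) := by
      intro j
      rw [hepszdef]
      unfold arg0pi
      rcases lt_or_gt_of_ne (hz j) with hneg | hpos
      · simp only [hneg.not_gt, if_false, hneg, if_true]
        push_cast
        rw [add_mul, Complex.exp_add, Complex.exp_pi_mul_I]
        have h := Complex.norm_mul_exp_arg_mul_I (z j)
        nth_rewrite 1 [← h]
        ring
      · simp only [hpos, if_true]
        push_cast
        have h := Complex.norm_mul_exp_arg_mul_I (z j)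
        nth_rewrite 1 [← h]
        ring
    have hprod : ∏ j, z j = ((∏ j, epsz j * ‖z j‖ : ℝ) : ℂ)
        * Complex.exp ((γ : ℂ) * Complex.I) := by
      calc ∏ j, z j = ∏ j, (((epsz j * ‖z j‖ : ℝ) : ℂ)
          * Complex.exp ((arg0pi (z j) : ℂ) * Complex.I)) :=
            Finset.prod_congr rfl fun j _ => hzj j
      _ = ((∏ j, epsz j * ‖z j‖ : ℝ) : ℂ)
          * ∏ j, Complex.exp ((arg0pi (z j) : ℂ) * Complex.I) := by
            rw [Finset.prod_mul_distrib]; push_cast; ring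
      _ = _ := by
            rw [← Complex.exp_sum]
            congr 2
            rw [← Finset.sum_mul, ← hsum]
            push_cast
            ring
    have habsC : (‖α‖ : ℂ) ≠ 0 := Complex.ofReal_ne_zero.mpr habsα
    have hαexp : (‖α‖ : ℂ) * Complex.exp ((γ : ℂ) * Complex.I) = α := by
      rw [hγdef]
      exact_mod_cast Complex.norm_mul_exp_arg_mul_I α
    refine ⟨(∏ j, epsz j * ‖z j‖) / ‖α‖, ?_, ?_⟩
    · apply div_ne_zero _ habsα
      apply Finset.prod_ne_zero_iff.mpr
      intro j _
      apply mul_ne_zero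
      · rw [hepszdef]; by_cases hc : 0 < (z j).im <;> simp [hc]
      · exact norm_ne_zero_iff.mpr (fun h => hz j (by rw [h]; simp))
    · rw [hprod]; set a : ℝ := ‖α‖ with ha; rw [← hαexp]
      push_cast
      field_simp
  have hS0 : S.coeff 0 = 0 := by
    obtain ⟨r, hr0, hr⟩ := hprodz
    have hH0 : H.coeff 0 = (-1 : ℂ) ^ n * ((r : ℂ) * α) := by
      rw [← hr, Polynomial.coeff_zero_eq_eval_zero, hHdef, Polynomial.eval_prod]
      rw [show (∏ j, Polynomial.eval 0 (Polynomial.X - Polynomial.C (z j)))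
          = ∏ j, (-1) * z j by
        refine Finset.prod_congr rfl fun j _ => ?_; simp]
      rw [Finset.prod_mul_distrib]
      simp
    rw [hScoeff, hH0]
    have : -(starRingEnd ℂ) α / ↑b * ((-1 : ℂ) ^ n * ((r : ℂ) * α))
        = (((-1 : ℝ) ^ n * r * (-(Complex.normSq α)) / b : ℝ) : ℂ) := by
      rw [show -(starRingEnd ℂ) α / ↑b * ((-1 : ℂ) ^ n * ((r : ℂ) * α))
          = ((-1 : ℂ) ^ n * (r : ℂ) * (-((starRingEnd ℂ) α * α))) / (b : ℂ) by ring]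
      rw [show (starRingEnd ℂ) α * α = (Complex.normSq α : ℂ) by
        rw [mul_comm]; exact Complex.mul_conj α]
      push_cast
      ring
    rw [this, Complex.ofReal_im]
  set Q : Polynomial ℝ := S.divX with hQdef
  have hSQ : S = Q * Polynomial.X := by
    have := Polynomial.divX_mul_X_add S
    rw [hS0] at this
    simp only [map_zero, add_zero] at this
    rw [hQdef, this]
  have hS_ne : S ≠ 0 := hSmonic.ne_zero
  have hQ_ne : Q ≠ 0 := by
    intro h
    rw [hSQ, h, zero_mul] at hS_ne
    exact hS_ne rfl
  have hQdeg : Q.natDegree = n - 1 := by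
    have h1 : S.natDegree = Q.natDegree + 1 := by
      rw [hSQ, Polynomial.natDegree_mul hQ_ne Polynomial.X_ne_zero, Polynomial.natDegree_X]
    omega
  have hQmonic : Q.Monic := by
    have h2 : S.leadingCoeff = Q.leadingCoeff * Polynomial.X.leadingCoeff := by
      rw [hSQ, Polynomial.leadingCoeff_mul]
    rw [Polynomial.leadingCoeff_X, mul_one] at h2
    rw [Polynomial.Monic, ← h2]
    exact hSmonic
  -- phase function
  set phi : ℝ → ℝ := fun x => ∑ j, psi (z j) x with hphidef
  set R : ℝ → ℝ := fun x => ∏ j, ‖(x : ℂ) - z j‖ with hRdef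
  set E : ℝ := ∏ j, eps (z j) with hEdef
  have hxw_ne : ∀ (x : ℝ) (j : Fin n), ((x : ℂ) - z j) ≠ 0 := by
    intro x j h
    have : ((x : ℂ) - z j).im = 0 := by rw [h]; simp
    rw [sub_im'] at this
    exact hz j (by linarith)
  have hRpos : ∀ x : ℝ, 0 < R x := by
    intro x
    rw [hRdef]
    exact Finset.prod_pos fun j _ => norm_pos_iff.mpr (hxw_ne x j)
  have hE0 : E ≠ 0 := by
    rw [hEdef]
    apply Finset.prod_ne_zero_iff.mpr
    intro j _
    unfold eps
    split_ifs <;> norm_num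
  have hphicont : Continuous phi := by
    rw [hphidef]
    exact continuous_finset_sum _ fun j _ => continuous_psi (hz j)
  have hphi0 : phi 0 = γ := by
    rw [hphidef, ← hsum]
    refine Finset.sum_congr rfl fun j _ => ?_
    unfold psi arg0pi
    rcases lt_or_gt_of_ne (hz j) with hneg | hpos
    · simp only [hneg.not_gt, if_false, hneg, if_true]
      rw [show ((0 : ℝ) : ℂ) - z j = -(z j) by push_cast; ring,
        Complex.arg_neg_eq_arg_add_pi_of_im_neg hneg]
      ring
    · simp only [hpos, if_true]
      rw [show ((0 : ℝ) : ℂ) - z j = -(z j) by push_cast; ring,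
        Complex.arg_neg_eq_arg_sub_pi_of_im_pos hpos]
      ring
  have hHeval : ∀ x : ℝ, H.eval (x : ℂ)
      = ↑(E * R x) * Complex.exp (↑(phi x) * Complex.I) := by
    intro x
    rw [hHdef, Polynomial.eval_prod]
    calc ∏ j, Polynomial.eval (x : ℂ) (Polynomial.X - Polynomial.C (z j))
        = ∏ j, (((eps (z j) * ‖(x : ℂ) - z j‖ : ℝ) : ℂ)
          * Complex.exp ((psi (z j) x : ℂ) * Complex.I)) := by
          refine Finset.prod_congr rfl fun j _ => ?_
          rw [Polynomial.eval_sub, Polynomial.eval_X, Polynomial.eval_C]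
          exact_mod_cast factor_psi x
      _ = _ := by
          rw [Finset.prod_mul_distrib, ← Complex.exp_sum]
          rw [hEdef, hRdef, hphidef]
          push_cast
          rw [Finset.prod_mul_distrib, ← Finset.sum_mul]
          try push_cast
          try ring
  have hPeval : ∀ x : ℝ,
      P.eval x = E * R x * (‖1 - α‖ * Real.sin (phi x - β)) / b := by
    intro x
    rw [hPdef, imPoly_eval, Polynomial.eval_mul, Polynomial.eval_C, hHeval x]
    rw [show (1 - (starRingEnd ℂ) α) / (b : ℂ) * (↑(E * R x)
        * Complex.exp (↑(phi x) * Complex.I))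
      = ((E * R x : ℝ) : ℂ) * ((starRingEnd ℂ) (1 - α)
        * Complex.exp (↑(phi x) * Complex.I)) / ((b : ℝ) : ℂ) by
        rw [map_sub, map_one]; ring]
    rw [div_ofReal_im]
    rw [show (((E * R x : ℝ) : ℂ) * ((starRingEnd ℂ) (1 - α)
        * Complex.exp (↑(phi x) * Complex.I))).im
      = (E * R x) * ((starRingEnd ℂ) (1 - α) * Complex.exp (↑(phi x) * Complex.I)).im by
        rw [Complex.mul_im]; simp]
    rw [im_conj_mul_exp, ← hβdef]
    try ring
  have hSeval : ∀ x : ℝ,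
      S.eval x = -(E * R x * (‖α‖ * Real.sin (phi x - γ))) / b := by
    intro x
    rw [hSdef, imPoly_eval, Polynomial.eval_mul, Polynomial.eval_C, hHeval x]
    rw [show -(starRingEnd ℂ) α / (b : ℂ) * (↑(E * R x)
        * Complex.exp (↑(phi x) * Complex.I))
      = ((E * R x : ℝ) : ℂ) * ((starRingEnd ℂ) (-α)
        * Complex.exp (↑(phi x) * Complex.I)) / ((b : ℝ) : ℂ) by
        rw [map_neg]; ring]
    rw [div_ofReal_im]
    rw [show (((E * R x : ℝ) : ℂ) * ((starRingEnd ℂ) (-α)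
        * Complex.exp (↑(phi x) * Complex.I))).im
      = (E * R x) * ((starRingEnd ℂ) (-α) * Complex.exp (↑(phi x) * Complex.I)).im by
        rw [Complex.mul_im]; simp]
    rw [im_conj_mul_exp]
    rw [Complex.arg_neg_eq_arg_sub_pi_of_im_pos hα, ← hγdef]
    rw [show phi x - (γ - Real.pi) = (phi x - γ) + Real.pi by ring, Real.sin_add_pi,
      norm_neg]
    ring
  set mm : ℕ := (Finset.univ.filter fun j => ¬ 0 < (z j).im).card with hmmdef
  set mp : ℕ := (Finset.univ.filter fun j => 0 < (z j).im).card with hmpdef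
  have hmmp : mp + mm = n := by
    rw [hmpdef, hmmdef]
    rw [Finset.card_filter_add_card_filter_not]
    simp
  have hphibot : Tendsto phi atBot (nhds (mm * Real.pi)) := by
    rw [hphidef]
    have h1 : Tendsto (fun x => ∑ j, psi (z j) x) atBot
        (nhds (∑ j : Fin n, if 0 < (z j).im then 0 else Real.pi)) :=
      tendsto_finset_sum _ fun j _ => tendsto_psi_atBot (hz j)
    convert h1 using 2
    rw [Finset.sum_ite, Finset.sum_const_zero, Finset.sum_const, hmmdef]
    simp [mul_comm]
  have hphitop : Tendsto phi atTop (nhds (mp * Real.pi)) := by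
    rw [hphidef]
    have h1 : Tendsto (fun x => ∑ j, psi (z j) x) atTop
        (nhds (∑ j : Fin n, if 0 < (z j).im then Real.pi else 0)) :=
      tendsto_finset_sum _ fun j _ => tendsto_psi_atTop (hz j)
    convert h1 using 2
    rw [Finset.sum_ite, Finset.sum_const_zero, Finset.sum_const, hmpdef]
    simp [mul_comm]
  -- convenient real inequalities about the levels
  have hγ2 : 0 < γ := by rw [hγdef]; exact hγpos
  have hγ3 : γ < Real.pi := by rw [hγdef]; exact hγlt
  have hβ2 : β < 0 := by rw [hβdef]; exact hβneg
  have hβ3 : -Real.pi < β := by rw [hβdef]; exact hβgt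
  have hγβ : γ < β + Real.pi := by rw [hγdef, hβdef]; linarith
  have hsin2 : 0 < Real.sin (γ - β) := by rw [hγdef, hβdef]; exact hsinpos
  have hcancel : ∀ a c : ℕ, β + a * Real.pi = β + c * Real.pi → a = c := by
    intro a c h
    have h1 : (a : ℝ) * Real.pi = c * Real.pi := by linarith
    have h2 : (a : ℝ) = c := mul_right_cancel₀ (ne_of_gt hπ) h1
    exact_mod_cast h2
  -- crossings
  have hcrossL : ∀ k : ℕ, ∃ x : ℝ, 1 ≤ k → k ≤ mm →
      x < 0 ∧ phi x = β + k * Real.pi := by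
    intro k
    by_cases hk : 1 ≤ k ∧ k ≤ mm
    · obtain ⟨hk1, hk2⟩ := hk
      have hklt : β + k * Real.pi < mm * Real.pi := by
        have h1 : (k : ℝ) ≤ mm := Nat.cast_le.mpr hk2
        nlinarith
      have hev : ∀ᶠ x in atBot, β + k * Real.pi < phi x :=
        hphibot.eventually (eventually_gt_nhds hklt)
      obtain ⟨x₀, hx₀, hx₀neg⟩ := (hev.and (eventually_lt_atBot 0)).exists
      have hγk : phi 0 < β + k * Real.pi := by
        rw [hphi0]
        have h1 : (1 : ℝ) ≤ k := Nat.one_le_cast.mpr hk1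
        nlinarith
      obtain ⟨x, hxmem, hxval⟩ := intermediate_value_Ioo' (le_of_lt hx₀neg)
        hphicont.continuousOn (mem_Ioo.mpr ⟨hγk, hx₀⟩)
      exact ⟨x, fun _ _ => ⟨hxmem.2, hxval⟩⟩
    · exact ⟨-1, fun h1 h2 => absurd ⟨h1, h2⟩ hk⟩
  have hcrossR : ∀ k : ℕ, ∃ x : ℝ, 1 ≤ k → k ≤ mp →
      0 < x ∧ phi x = β + k * Real.pi := by
    intro k
    by_cases hk : 1 ≤ k ∧ k ≤ mp
    · obtain ⟨hk1, hk2⟩ := hk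
      have hklt : β + k * Real.pi < mp * Real.pi := by
        have h1 : (k : ℝ) ≤ mp := Nat.cast_le.mpr hk2
        nlinarith
      have hev : ∀ᶠ x in atTop, β + k * Real.pi < phi x :=
        hphitop.eventually (eventually_gt_nhds hklt)
      obtain ⟨x₁, hx₁, hx₁pos⟩ := (hev.and (eventually_gt_atTop 0)).exists
      have hγk : phi 0 < β + k * Real.pi := by
        rw [hphi0]
        have h1 : (1 : ℝ) ≤ k := Nat.one_le_cast.mpr hk1
        nlinarith
      obtain ⟨x, hxmem, hxval⟩ := intermediate_value_Ioo (le_of_lt hx₁pos)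
        hphicont.continuousOn (mem_Ioo.mpr ⟨hγk, hx₁⟩)
      exact ⟨x, fun _ _ => ⟨hxmem.1, hxval⟩⟩
    · exact ⟨1, fun h1 h2 => absurd ⟨h1, h2⟩ hk⟩
  obtain ⟨xL, hxL⟩ := Classical.axiomOfChoice hcrossL
  obtain ⟨xR, hxR⟩ := Classical.axiomOfChoice hcrossR
  set lam : Fin n → ℝ := fun i => if i.1 < mm then xL (mm - i.1) else xR (i.1 - mm + 1)
    with hlamdef
  have hKrange : ∀ i : Fin n, (i.1 < mm → 1 ≤ mm - i.1 ∧ mm - i.1 ≤ mm)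
      ∧ (¬ i.1 < mm → 1 ≤ i.1 - mm + 1 ∧ i.1 - mm + 1 ≤ mp) := by
    intro i
    have h2 := i.2
    constructor <;> intro h <;> constructor <;> omega
  set K : Fin n → ℕ := fun i => if i.1 < mm then mm - i.1 else i.1 - mm + 1 with hKdef
  have hphilam : ∀ i : Fin n, phi (lam i) = β + K i * Real.pi := by
    intro i
    rw [hlamdef, hKdef]
    by_cases hi : i.1 < mm
    · simp only [hi, if_true]
      exact (hxL (mm - i.1) ((hKrange i).1 hi).1 ((hKrange i).1 hi).2).2
    · simp only [hi, if_false]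
      exact (hxR (i.1 - mm + 1) ((hKrange i).2 hi).1 ((hKrange i).2 hi).2).2
  have hlamneg : ∀ i : Fin n, i.1 < mm → lam i < 0 := by
    intro i hi
    rw [hlamdef]
    simp only [hi, if_true]
    exact (hxL (mm - i.1) ((hKrange i).1 hi).1 ((hKrange i).1 hi).2).1
  have hlampos : ∀ i : Fin n, mm ≤ i.1 → 0 < lam i := by
    intro i hi
    have hi' : ¬ i.1 < mm := not_lt.mpr hi
    rw [hlamdef]
    simp only [hi', if_false]
    exact (hxR (i.1 - mm + 1) ((hKrange i).2 hi').1 ((hKrange i).2 hi').2).1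
  have hsinlam : ∀ x : ℝ, ∀ k : ℕ, phi x = β + k * Real.pi →
      P.eval x = 0 ∧ S.eval x = -(E * R x * ‖α‖ * ((-1) ^ k * Real.sin (β - γ))) / b
      := by
    intro x k h
    constructor
    · rw [hPeval, show phi x - β = k * Real.pi by rw [h]; ring, Real.sin_nat_mul_pi]
      ring
    · rw [hSeval, show phi x - γ = (β - γ) + k * Real.pi by rw [h]; ring,
        Real.sin_add_nat_mul_pi]
      ring
  have hlamroot : ∀ i : Fin n, P.eval (lam i) = 0 :=
    fun i => (hsinlam (lam i) (K i) (hphilam i)).1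
  have hlaminj : Function.Injective lam := by
    intro i j hij
    have hK : K i = K j := by
      apply hcancel
      rw [← hphilam i, ← hphilam j, hij]
    by_cases hi : i.1 < mm <;> by_cases hj : j.1 < mm
    · apply Fin.ext
      simp only [hKdef, hi, hj, if_true] at hK
      omega
    · exfalso
      have h1 := hlamneg i hi
      have h2 := hlampos j (le_of_not_gt hj)
      rw [hij] at h1
      linarith
    · exfalso
      have h1 := hlamneg j hj
      have h2 := hlampos i (le_of_not_gt hi)
      rw [hij] at h2
      linarith
    · apply Fin.ext
      simp only [hKdef, hi, hj, if_false] at hK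
      have h2 := i.2
      have h3 := j.2
      omega
  have hPprod : P = ∏ i, (Polynomial.X - Polynomial.C (lam i)) :=
    monic_eq_prod_of_roots hPmonic hPdeg lam hlaminj hlamroot
  have hmemroot : ∀ y : ℝ, P.eval y = 0 → ∃ i, y = lam i := by
    intro y hy
    rw [hPprod, Polynomial.eval_prod] at hy
    obtain ⟨i, _, hi⟩ := Finset.prod_eq_zero_iff.mp hy
    refine ⟨i, ?_⟩
    have h2 : y - lam i = 0 := by simpa using hi
    linarith
  have hLorder : ∀ k k' : ℕ, 1 ≤ k → k < k' → k' ≤ mm → xL k' < xL k := by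
    intro k k' hk1 hkk hk2
    obtain ⟨hxk_neg, hxk_val⟩ := hxL k hk1 (by omega)
    obtain ⟨hxk'_neg, hxk'_val⟩ := hxL k' (by omega) hk2
    rcases lt_trichotomy (xL k') (xL k) with h | h | h
    · exact h
    · exfalso
      have : k = k' := hcancel _ _ (by rw [← hxk_val, ← hxk'_val, h])
      omega
    · exfalso
      have hmid1 : phi 0 < β + k * Real.pi := by
        rw [hphi0]
        have h1 : (1 : ℝ) ≤ k := Nat.one_le_cast.mpr hk1
        nlinarith
      have hmid2 : β + k * Real.pi < phi (xL k') := by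
        rw [hxk'_val]
        have h1 : (k : ℝ) < k' := Nat.cast_lt.mpr hkk
        nlinarith
      obtain ⟨y, hymem, hyval⟩ := intermediate_value_Ioo' (le_of_lt hxk'_neg)
        hphicont.continuousOn (mem_Ioo.mpr ⟨hmid1, hmid2⟩)
      have hyroot : P.eval y = 0 := (hsinlam y k hyval).1
      obtain ⟨i, rfl⟩ := hmemroot y hyroot
      by_cases hi : i.1 < mm
      · have hK : K i = k := hcancel _ _ (by rw [← hphilam i, hyval])
        simp only [hKdef, hi, if_true] at hK
        have hlameq : lam i = xL k := by
          rw [hlamdef]; simp only [hi, if_true, hK]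
        rw [hlameq] at hymem
        have := hymem.1
        linarith
      · have h1 := hlampos i (le_of_not_gt hi)
        have h2 := hymem.2
        linarith
  have hRorder : ∀ k k' : ℕ, 1 ≤ k → k < k' → k' ≤ mp → xR k < xR k' := by
    intro k k' hk1 hkk hk2
    obtain ⟨hxk_pos, hxk_val⟩ := hxR k hk1 (by omega)
    obtain ⟨hxk'_pos, hxk'_val⟩ := hxR k' (by omega) hk2
    rcases lt_trichotomy (xR k) (xR k') with h | h | h
    · exact h
    · exfalso
      have : k = k' := hcancel _ _ (by rw [← hxk_val, ← hxk'_val, h])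
      omega
    · exfalso
      have hmid1 : phi 0 < β + k * Real.pi := by
        rw [hphi0]
        have h1 : (1 : ℝ) ≤ k := Nat.one_le_cast.mpr hk1
        nlinarith
      have hmid2 : β + k * Real.pi < phi (xR k') := by
        rw [hxk'_val]
        have h1 : (k : ℝ) < k' := Nat.cast_lt.mpr hkk
        nlinarith
      obtain ⟨y, hymem, hyval⟩ := intermediate_value_Ioo (le_of_lt hxk'_pos)
        hphicont.continuousOn (mem_Ioo.mpr ⟨hmid1, hmid2⟩)
      have hyroot : P.eval y = 0 := (hsinlam y k hyval).1
      obtain ⟨i, rfl⟩ := hmemroot y hyroot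
      by_cases hi : i.1 < mm
      · have h1 := hlamneg i hi
        have h2 := hymem.1
        linarith
      · have hK : K i = k := hcancel _ _ (by rw [← hphilam i, hyval])
        simp only [hKdef, hi, if_false] at hK
        have hlameq : lam i = xR k := by
          rw [hlamdef]; simp only [hi, if_false, hK]
        rw [hlameq] at hymem
        have := hymem.2
        linarith
  have hlammono : StrictMono lam := by
    intro i j hij
    have hij' : i.1 < j.1 := hij
    by_cases hj : j.1 < mm
    · have hi : i.1 < mm := by omega
      have h1 : lam i = xL (mm - i.1) := by rw [hlamdef]; simp only [hi, if_true]
      have h2 : lam j = xL (mm - j.1) := by rw [hlamdef]; simp only [hj, if_true]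
      rw [h1, h2]
      exact hLorder (mm - j.1) (mm - i.1) (by omega) (by omega) (by omega)
    · by_cases hi : i.1 < mm
      · calc lam i < 0 := hlamneg i hi
          _ < lam j := hlampos j (le_of_not_gt hj)
      · have h1 : lam i = xR (i.1 - mm + 1) := by rw [hlamdef]; simp only [hi, if_false]
        have h2 : lam j = xR (j.1 - mm + 1) := by rw [hlamdef]; simp only [hj, if_false]
        have h3 := j.2
        rw [h1, h2]
        exact hRorder (i.1 - mm + 1) (j.1 - mm + 1) (by omega) (by omega) (by omega)
  have hsinβγ : Real.sin (β - γ) < 0 := by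
    rw [show β - γ = -(γ - β) by ring, Real.sin_neg]
    linarith
  have hQeval : ∀ x : ℝ, S.eval x = Q.eval x * x := by
    intro x
    rw [hSQ, Polynomial.eval_mul, Polynomial.eval_X]
  have hSS : ∀ i j : Fin n,
      (Q.eval (lam i) * Q.eval (lam j)) * (lam i * lam j)
        = (E * E) * (R (lam i) * R (lam j)) * (‖α‖ * ‖α‖)
          * (Real.sin (β - γ) * Real.sin (β - γ)) / (b * b) * ((-1 : ℝ) ^ (K i + K j)) := by
    intro i j
    have hi := (hsinlam _ _ (hphilam i)).2
    have hj := (hsinlam _ _ (hphilam j)).2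
    have h1 : (Q.eval (lam i) * Q.eval (lam j)) * (lam i * lam j)
        = S.eval (lam i) * S.eval (lam j) := by
      rw [hQeval, hQeval]; ring
    rw [h1, hi, hj, pow_add]
    field_simp
  have hposfactor : ∀ i j : Fin n,
      0 < (E * E) * (R (lam i) * R (lam j)) * (‖α‖ * ‖α‖)
        * (Real.sin (β - γ) * Real.sin (β - γ)) / (b * b) := by
    intro i j
    have h1 : 0 < E * E := mul_self_pos.mpr hE0
    have h2 : 0 < R (lam i) * R (lam j) := mul_pos (hRpos _) (hRpos _)
    have h3 : 0 < ‖α‖ * ‖α‖ :=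
      mul_self_pos.mpr habsα
    have h4 : 0 < Real.sin (β - γ) * Real.sin (β - γ) :=
      mul_self_pos.mpr (ne_of_lt hsinβγ)
    have h5 : 0 < b * b := mul_self_pos.mpr hb
    positivity
  have hQsign : ∀ i j : Fin n, Odd (K i + K j) → lam i * lam j > 0 →
      Q.eval (lam i) * Q.eval (lam j) < 0 := by
    intro i j hodd hprod
    have h1 := hSS i j
    rw [hodd.neg_one_pow] at h1
    have h2 := hposfactor i j
    by_contra hge
    push_neg at hge
    have h3 : 0 ≤ (Q.eval (lam i) * Q.eval (lam j)) * (lam i * lam j) :=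
      mul_nonneg hge (le_of_lt hprod)
    rw [h1] at h3
    nlinarith [h2, h3]
  have hQsign2 : ∀ i j : Fin n, Even (K i + K j) → lam i * lam j < 0 →
      Q.eval (lam i) * Q.eval (lam j) < 0 := by
    intro i j heven hprod
    have h1 := hSS i j
    rw [heven.neg_one_pow] at h1
    have h2 := hposfactor i j
    by_contra hge
    push_neg at hge
    have h3 : (Q.eval (lam i) * Q.eval (lam j)) * (lam i * lam j) ≤ 0 :=
      mul_nonpos_of_nonneg_of_nonpos hge (le_of_lt hprod)
    rw [h1] at h3
    nlinarith [h2, h3]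
  have halt : ∀ i : Fin (n - 1),
      Q.eval (lam ⟨i.1, by omega⟩) * Q.eval (lam ⟨i.1 + 1, by omega⟩) < 0 := by
    intro i
    have hi2 := i.2
    set i0 : Fin n := ⟨i.1, by omega⟩ with hi0
    set i1 : Fin n := ⟨i.1 + 1, by omega⟩ with hi1
    have hv0 : (i0 : ℕ) = i.1 := rfl
    have hv1 : (i1 : ℕ) = i.1 + 1 := rfl
    by_cases hc1 : i.1 + 1 < mm
    · have hc0 : i.1 < mm := by omega
      apply hQsign
      · have hK0 : K i0 = mm - i.1 := by simp only [hKdef, hi0, hc0, if_true]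
        have hK1 : K i1 = mm - (i.1 + 1) := by simp only [hKdef, hi1, hc1, if_true]
        rw [hK0, hK1, Nat.odd_iff]
        omega
      · exact mul_pos_of_neg_of_neg (hlamneg i0 hc0) (hlamneg i1 hc1)
    · by_cases hc0 : i.1 < mm
      · have he : i.1 + 1 = mm := by omega
        apply hQsign2
        · have hK0 : K i0 = mm - i.1 := by simp only [hKdef, hi0, hc0, if_true]
          have hK1 : K i1 = (i.1 + 1) - mm + 1 := by simp only [hKdef, hi1, hc1, if_false]
          rw [hK0, hK1, Nat.even_iff]
          omega
        · exact mul_neg_of_neg_of_pos (hlamneg i0 hc0) (hlampos i1 (by omega))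
      · apply hQsign
        · have hK0 : K i0 = i.1 - mm + 1 := by simp only [hKdef, hi0, hc0, if_false]
          have hK1 : K i1 = (i.1 + 1) - mm + 1 := by simp only [hKdef, hi1, hc1, if_false]
          rw [hK0, hK1, Nat.odd_iff]
          omega
        · exact mul_pos (hlampos i0 (by omega)) (hlampos i1 (by omega))
  have hmu : ∀ i : Fin (n - 1), ∃ t : ℝ,
      lam ⟨i.1, by omega⟩ < t ∧ t < lam ⟨i.1 + 1, by omega⟩ ∧ Q.eval t = 0 := by
    intro i
    have hi2 := i.2
    have hlt : lam ⟨i.1, by omega⟩ < lam ⟨i.1 + 1, by omega⟩ := by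
      apply hlammono
      exact Nat.lt_succ_self i.1
    exact exists_root_between hlt (halt i)
  obtain ⟨mu, hmuspec⟩ := Classical.axiomOfChoice hmu
  have hmumono : StrictMono mu := by
    intro i j hij
    have hij' : i.1 < j.1 := hij
    have hi2 := i.2
    have hj2 := j.2
    have h1 : mu i < lam ⟨i.1 + 1, by omega⟩ := (hmuspec i).2.1
    have h2 : lam ⟨j.1, by omega⟩ < mu j := (hmuspec j).1
    have h3 : lam ⟨i.1 + 1, by omega⟩ ≤ lam ⟨j.1, by omega⟩ := by
      apply hlammono.monotone
      exact hij'
    linarith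
  have hmuinj : Function.Injective mu := hmumono.injective
  have hQprod : Q = ∏ i, (Polynomial.X - Polynomial.C (mu i)) :=
    monic_eq_prod_of_roots hQmonic hQdeg mu hmuinj (fun i => (hmuspec i).2.2)
  refine ⟨P, Q, hPmonic, hQmonic, hPdeg, hQdeg,
    ⟨lam, mu, hlammono, hmumono, hPprod, hQprod, fun i => ⟨(hmuspec i).1, (hmuspec i).2.1⟩⟩, ?_⟩
  rw [hkey, hSQ]
  rw [Polynomial.map_mul, Polynomial.map_X]
  ring

set_option maxHeartbeats 1000000 in
/-- Generalized Hermite–Biehler theorem (inverse part, broken interlacing at `t = 0`):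
if `Im α > 0` and `z₁, …, zₙ` are non-real with `∑ⱼ Arg_{[0,π)} zⱼ = Arg α`, then for
`h = ∏ⱼ (z - zⱼ)` there exists a unique pair of monic real polynomials `p`, `q` with
`deg p = n`, `deg q = n - 1` and strictly interlacing zeros such that
`h = α p + (1 - α) z q`. -/

theorem genHB_at_zero_inverse (n : ℕ) (α : ℂ) (hα : 0 < α.im)
    (z : Fin n → ℂ) (hz : ∀ j, (z j).im ≠ 0)
    (hsum : ∑ j, arg0pi (z j) = Complex.arg α) :
    ∃! pq : Polynomial ℝ × Polynomial ℝ,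
      pq.1.Monic ∧ pq.2.Monic ∧ pq.1.natDegree = n ∧ pq.2.natDegree = n - 1 ∧
      StrictInterlace n pq.1 pq.2 ∧
      (∏ j, (Polynomial.X - Polynomial.C (z j)))
        = Polynomial.C α * pq.1.map (algebraMap ℝ ℂ)
          + Polynomial.C (1 - α) * (Polynomial.X * pq.2.map (algebraMap ℝ ℂ)) := by
  classical
  have hb : α.im ≠ 0 := ne_of_gt hα
  have hα0 : α ≠ 0 := fun h => by rw [h] at hα; simp at hα
  rcases Nat.eq_zero_or_pos n with rfl | hn
  · exfalso
    have h0 : Complex.arg α = 0 := by simpa using hsum.symm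
    have h1 := (Complex.arg_eq_zero_iff.mp h0).2
    rw [h1] at hα
    exact lt_irrefl 0 hα
  obtain ⟨P, Q, hPm, hQm, hPd, hQd, hint, heq⟩ := exists_pair n hn α hα z hz hsum
  refine ⟨(P, Q), ⟨hPm, hQm, hPd, hQd, ?_, heq⟩, ?_⟩
  · obtain ⟨lam, mu, h1, h2, h3, h4, h5⟩ := hint
    exact ⟨lam, mu, h1, h2, h3, h4, h5⟩
  · rintro ⟨p₁, q₁⟩ ⟨hm1, hm2, hd1, hd2, hint1, heq1⟩
    have hEq : Polynomial.C α * p₁.map (algebraMap ℝ ℂ)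
          + Polynomial.C (1 - α) * (Polynomial.X * q₁.map (algebraMap ℝ ℂ))
        = Polynomial.C α * P.map (algebraMap ℝ ℂ)
          + Polynomial.C (1 - α) * (Polynomial.X * Q.map (algebraMap ℝ ℂ)) := by
      rw [← heq1, ← heq]
    have hcoeff : ∀ k, α * ((p₁.coeff k : ℂ))
        + (1 - α) * ((Polynomial.X * q₁.map (algebraMap ℝ ℂ)).coeff k)
        = α * ((P.coeff k : ℂ))
          + (1 - α) * ((Polynomial.X * Q.map (algebraMap ℝ ℂ)).coeff k) := by
      intro k
      have h := congrArg (fun f => Polynomial.coeff f k) hEq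
      simp only [Polynomial.coeff_add, Polynomial.coeff_C_mul, Polynomial.coeff_map,
        Complex.coe_algebraMap] at h
      exact h
    have hq : ∀ k, q₁.coeff k = Q.coeff k := by
      intro k
      have h := hcoeff (k + 1)
      rw [Polynomial.coeff_X_mul, Polynomial.coeff_X_mul,
        Polynomial.coeff_map, Polynomial.coeff_map] at h
      simp only [Complex.coe_algebraMap] at h
      have h2 : α * ((p₁.coeff (k + 1) - P.coeff (k + 1) : ℝ) : ℂ)
          + (1 - α) * ((q₁.coeff k - Q.coeff k : ℝ) : ℂ) = 0 := by
        push_cast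
        push_cast at h
        linear_combination h
      have h3 := (realComb_zero α hb _ _ h2).2
      linarith [sub_eq_zero.mp (by exact_mod_cast h3)]
    have hp : ∀ k, p₁.coeff k = P.coeff k := by
      intro k
      cases k with
      | zero =>
        have h := hcoeff 0
        simp only [Polynomial.mul_coeff_zero, Polynomial.coeff_X_zero, zero_mul, mul_zero,
          add_zero] at h
        have h2 := mul_left_cancel₀ hα0 h
        exact_mod_cast h2
      | succ k =>
        have h := hcoeff (k + 1)
        rw [Polynomial.coeff_X_mul, Polynomial.coeff_X_mul,
          Polynomial.coeff_map, Polynomial.coeff_map] at h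
        simp only [Complex.coe_algebraMap] at h
        rw [hq k] at h
        have h2 : α * ((p₁.coeff (k + 1) : ℝ) : ℂ) = α * ((P.coeff (k + 1) : ℝ) : ℂ) := by
          linear_combination h
        have h3 := mul_left_cancel₀ hα0 h2
        exact_mod_cast h3
    exact Prod.ext (Polynomial.ext hp) (Polynomial.ext hq)
end

section
/- Let p and r be monic real polynomials of degree n, and let α be a complex number with Im α > 0. Define the monic polynomial h(z) = α p(z) + (1 - α) r(z) = ∏_{j=1}^n (z - z_j). If the zeros λ_1, ..., λ_n of p and μ_1, ..., μ_n of r satisfy λ_1 < μ_1 < λ_2 < ... < λ_s < μ_s < 0 < μ_{s+1} < λ_{s+1} < ... < μ_n < λ_n for some 0 ≤ s ≤ n - 1, then all zeros z_1, ..., z_n of h are non-real and satisfy Σ_{j=1}^n Arg_{[0,π)} z_j < Arg α; moreover, the number of z_j in the open upper half-plane ℂ₊ equals n - s (the number of positive zeros of p), and the number of z_j in the open lower half-plane ℂ₋ equals s (the number of negative zeros of p). -/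
/-- The zeros `λ₁ < μ₁ < ⋯ < λ_s < μ_s < 0 < μ_{s+1} < λ_{s+1} < ⋯ < μ_n < λ_n`
pattern (0-indexed: the first `s` pairs are negative with `λ` before `μ`, the remaining
ones positive with `μ` before `λ`). For `s = 0` this reads
`0 < μ₁ < λ₁ < μ₂ < λ₂ < ⋯ < μ_n < λ_n`. -/
def BrokenInterlace (n s : ℕ) (lam mu : Fin n → ℝ) : Prop :=
  (∀ i : Fin n, i.1 < s → lam i < mu i ∧ mu i < 0) ∧
  (∀ i : Fin n, s ≤ i.1 → 0 < mu i ∧ mu i < lam i) ∧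
  (∀ i : Fin n, ∀ h : i.1 + 1 < n, i.1 + 1 < s → mu i < lam ⟨i.1 + 1, h⟩) ∧
  (∀ i : Fin n, ∀ h : i.1 + 1 < n, s ≤ i.1 → lam i < mu ⟨i.1 + 1, h⟩)


open Real Complex Filter Finset Set

namespace GenHBAux

noncomputable def th (a b x : ℝ) : ℝ :=
  Real.arctan ((x - a)/b) - (if 0 < b then Real.pi/2 else -(Real.pi/2))

lemma th_continuous (a b : ℝ) : Continuous (th a b) := by
  unfold th
  exact (Real.continuous_arctan.comp (by continuity)).sub continuous_const

lemma th_mem_pos {a b : ℝ} (hb : 0 < b) (x : ℝ) : th a b x ∈ Set.Ioo (-Real.pi) 0 := by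
  have h1 := Real.arctan_lt_pi_div_two ((x - a)/b)
  have h2 := Real.neg_pi_div_two_lt_arctan ((x - a)/b)
  simp only [th, if_pos hb]
  constructor <;> nlinarith [Real.pi_pos]

lemma th_mem_neg {a b : ℝ} (hb : b < 0) (x : ℝ) : th a b x ∈ Set.Ioo 0 Real.pi := by
  have h1 := Real.arctan_lt_pi_div_two ((x - a)/b)
  have h2 := Real.neg_pi_div_two_lt_arctan ((x - a)/b)
  simp only [th, if_neg (not_lt.mpr hb.le)]
  constructor <;> nlinarith [Real.pi_pos]

lemma th_cos_sin {a b : ℝ} (hb : b ≠ 0) (x : ℝ) :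
    Real.sqrt ((x - a)^2 + b^2) * Real.cos (th a b x) = x - a ∧
    Real.sqrt ((x - a)^2 + b^2) * Real.sin (th a b x) = -b := by
  set t : ℝ := (x - a)/b with ht
  have hsq : (x - a)^2 + b^2 = b^2 * (1 + t^2) := by
    rw [ht]; field_simp; ring
  have hb2 : (0:ℝ) < 1 + t^2 := by positivity
  have hs0 : Real.sqrt (1 + t^2) ≠ 0 := by positivity
  have hsqrt : Real.sqrt ((x - a)^2 + b^2) = |b| * Real.sqrt (1 + t^2) := by
    rw [hsq, Real.sqrt_mul (sq_nonneg b), Real.sqrt_sq_eq_abs]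
  have hbt : b * t = x - a := by rw [ht]; field_simp
  rcases lt_or_gt_of_ne hb with h | h
  · have hth : th a b x = Real.arctan t + Real.pi/2 := by
      unfold th; rw [if_neg (not_lt.mpr h.le)]; ring
    have habs : |b| = -b := abs_of_neg h
    constructor
    · rw [hsqrt, hth, Real.cos_add_pi_div_two, Real.sin_arctan, habs]
      field_simp
      rw [← hbt]
    · rw [hsqrt, hth, Real.sin_add_pi_div_two, Real.cos_arctan, habs]
      field_simp
  · have hth : th a b x = Real.arctan t - Real.pi/2 := by
      unfold th; rw [if_pos h]
    have habs : |b| = b := abs_of_pos h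
    constructor
    · rw [hsqrt, hth, Real.cos_sub_pi_div_two, Real.sin_arctan, habs]
      field_simp
      rw [← hbt]
    · rw [hsqrt, hth, Real.sin_sub_pi_div_two, Real.cos_arctan, habs]
      field_simp

lemma th_exp {a b : ℝ} (hb : b ≠ 0) (x : ℝ) :
    (x : ℂ) - (a + b * Complex.I)
      = (Real.sqrt ((x - a)^2 + b^2) : ℝ) * Complex.exp ((th a b x : ℝ) * Complex.I) := by
  obtain ⟨h1, h2⟩ := th_cos_sin hb x
  apply Complex.ext
  · simp only [Complex.sub_re, Complex.ofReal_re, Complex.add_re, Complex.mul_re,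
      Complex.ofReal_im, Complex.I_re, Complex.I_im, Complex.mul_im]
    rw [Complex.exp_ofReal_mul_I_re]
    simpa using h1.symm
  · simp only [Complex.sub_im, Complex.ofReal_im, Complex.add_im, Complex.mul_im,
      Complex.ofReal_re, Complex.I_re, Complex.I_im, Complex.mul_re]
    rw [Complex.exp_ofReal_mul_I_im]
    simpa using h2.symm

lemma th_tendsto_atTop (a : ℝ) {b : ℝ} (hb : b ≠ 0) :
    Tendsto (th a b) atTop (nhds 0) := by
  have harg : Tendsto (fun x => (x - a)/b) atTop (if 0 < b then atTop else atBot) := by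
    split_ifs with h
    · exact (tendsto_atTop_add_const_right _ (-a) tendsto_id).atTop_div_const h
    · have hb' : b < 0 := lt_of_le_of_ne (not_lt.mp h) hb
      have hfun : (fun x => (x - a)/b) = fun x : ℝ => -((x - a)/(-b)) := by
        funext x; rw [div_neg, neg_neg]
      rw [hfun]
      exact tendsto_neg_atTop_atBot.comp
        ((tendsto_atTop_add_const_right _ (-a) tendsto_id).atTop_div_const (by linarith))
  have : Tendsto (fun x => Real.arctan ((x - a)/b)) atTop
      (nhds (if 0 < b then Real.pi/2 else -(Real.pi/2))) := by
    split_ifs with h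
    · simp only [if_pos h] at harg
      exact (Real.tendsto_arctan_atTop.mono_right nhdsWithin_le_nhds).comp harg
    · simp only [if_neg h] at harg
      exact (Real.tendsto_arctan_atBot.mono_right nhdsWithin_le_nhds).comp harg
  have := this.sub_const (if 0 < b then Real.pi/2 else -(Real.pi/2))
  unfold th
  simpa using this

lemma th_tendsto_atBot (a : ℝ) {b : ℝ} (hb : b ≠ 0) :
    Tendsto (th a b) atBot (nhds (if 0 < b then -Real.pi else Real.pi)) := by
  have harg : Tendsto (fun x => (x - a)/b) atBot (if 0 < b then atBot else atTop) := by
    split_ifs with h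
    · exact (tendsto_atBot_add_const_right _ (-a) tendsto_id).atBot_div_const h
    · have hb' : b < 0 := lt_of_le_of_ne (not_lt.mp h) hb
      have hfun : (fun x => (x - a)/b) = fun x : ℝ => -((x - a)/(-b)) := by
        funext x; rw [div_neg, neg_neg]
      rw [hfun]
      exact tendsto_neg_atBot_atTop.comp
        ((tendsto_atBot_add_const_right _ (-a) tendsto_id).atBot_div_const (by linarith))
  have h2 : Tendsto (fun x => Real.arctan ((x - a)/b)) atBot
      (nhds (if 0 < b then -(Real.pi/2) else Real.pi/2)) := by
    split_ifs with h
    · simp only [if_pos h] at harg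
      exact (Real.tendsto_arctan_atBot.mono_right nhdsWithin_le_nhds).comp harg
    · simp only [if_neg h] at harg
      exact (Real.tendsto_arctan_atTop.mono_right nhdsWithin_le_nhds).comp harg
  have h3 := h2.sub_const (if 0 < b then Real.pi/2 else -(Real.pi/2))
  unfold th
  convert h3 using 2
  split_ifs <;> ring

lemma window_mem {f : ℝ → ℝ} (hf : Continuous f) {a b w y : ℝ} (hy : y ∈ Set.Icc a b)
    (havoid : ∀ x ∈ Set.Icc a b, ∀ k : ℤ, f x ≠ w + 2*Real.pi*k)
    (hfy : f y ∈ Set.Ioo w (w + 2*Real.pi)) :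
    ∀ x ∈ Set.Icc a b, f x ∈ Set.Ioo w (w + 2*Real.pi) := by
  intro x hx
  have hsub : Set.uIcc x y ⊆ Set.Icc a b := Set.uIcc_subset_Icc hx hy
  by_contra hcon
  have hivt := intermediate_value_uIcc (a := x) (b := y) (f := f) hf.continuousOn
  rw [Set.mem_Ioo] at hcon
  rcases not_and_or.mp hcon with h | h
  · have hle : f x ≤ w := not_lt.mp h
    have : w ∈ Set.uIcc (f x) (f y) := by
      rw [Set.mem_uIcc]; left; exact ⟨hle, hfy.1.le⟩
    obtain ⟨c, hc, hfc⟩ := hivt this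
    exact havoid c (hsub hc) 0 (by simpa using hfc)
  · have hge : w + 2*Real.pi ≤ f x := not_lt.mp h
    have : w + 2*Real.pi ∈ Set.uIcc (f x) (f y) := by
      rw [Set.mem_uIcc]; right; exact ⟨hfy.2.le, hge⟩
    obtain ⟨c, hc, hfc⟩ := hivt this
    exact havoid c (hsub hc) 1 (by simpa using hfc)

lemma pin {g t w : ℝ} (hg : g ∈ Set.Ioo w (w + 2*Real.pi))
    (ht : t ∈ Set.Ioo w (w + 2*Real.pi))
    (he : Complex.exp ((g:ℂ) * Complex.I) = Complex.exp ((t:ℂ) * Complex.I)) : g = t := by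
  obtain ⟨k, hk⟩ := Complex.exp_eq_exp_iff_exists_int.mp he
  have hk' : (g:ℂ) = ((t + k * (2*Real.pi) : ℝ) : ℂ) := by
    push_cast
    have hI : ((g:ℂ)) * Complex.I = (↑t + ↑k * (2*↑Real.pi)) * Complex.I := by
      rw [hk]; ring
    exact mul_right_cancel₀ Complex.I_ne_zero hI
  have hgr : g = t + k * (2*Real.pi) := by exact_mod_cast hk'
  have hpi := Real.pi_pos
  have hk0 : k = 0 := by
    rcases lt_trichotomy k 0 with h | h | h
    · have : (k:ℝ) ≤ -1 := by exact_mod_cast (by omega : k ≤ -1)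
      nlinarith [hg.1, hg.2, ht.1, ht.2]
    · exact h
    · have : (1:ℝ) ≤ (k:ℝ) := by exact_mod_cast h
      nlinarith [hg.1, hg.2, ht.1, ht.2]
  simp [hk0] at hgr
  exact hgr

lemma neg_one_zpow_real (m : ℤ) : ((-1:ℝ)^m = 1 ∧ Even m) ∨ ((-1:ℝ)^m = -1 ∧ Odd m) := by
  rcases Int.even_or_odd m with h | h
  · exact Or.inl ⟨Even.neg_one_zpow h, h⟩
  · exact Or.inr ⟨Odd.neg_one_zpow h, h⟩

lemma exp_int_pi : ∀ m : ℤ, Complex.exp ((m * Real.pi : ℝ) * Complex.I) = (-1:ℂ)^m := by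
  intro m
  have : ((m * Real.pi : ℝ) : ℂ) * Complex.I = m * ((Real.pi : ℂ) * Complex.I) := by
    push_cast; ring
  rw [this, Complex.exp_int_mul, Complex.exp_pi_mul_I]

lemma negOnePow_eq {m : ℤ} {c : ℕ} (h : Even (m - c)) : (-1:ℝ)^m = (-1:ℝ)^c := by
  have : (-1:ℝ)^m = (-1:ℝ)^(m - c) * (-1:ℝ)^(c:ℤ) := by
    rw [← zpow_add₀ (by norm_num : (-1:ℝ) ≠ 0)]; ring_nf
  rw [this, Even.neg_one_zpow h, one_mul, zpow_natCast]

lemma expeq {ρ v : ℝ} (hρ : 0 < ρ) (m : ℤ) (hv : 0 < (-1:ℝ)^m * v) {G β' : ℝ}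
    (h : (ρ:ℂ) * Complex.exp ((G:ℂ) * Complex.I) = (v:ℂ) * Complex.exp ((β':ℂ) * Complex.I)) :
    Complex.exp ((G:ℂ) * Complex.I) = Complex.exp (((β' + m * Real.pi : ℝ) : ℂ) * Complex.I) := by
  have hone : ‖Complex.exp ((G:ℂ) * Complex.I)‖ = 1 :=
    Complex.norm_exp_ofReal_mul_I G
  have hone' : ‖Complex.exp ((β':ℂ) * Complex.I)‖ = 1 :=
    Complex.norm_exp_ofReal_mul_I β'
  have habs : ρ = |v| := by
    have := congrArg norm h
    rw [norm_mul, norm_mul, hone, hone', Complex.norm_real, Complex.norm_real,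
      mul_one, mul_one, Real.norm_eq_abs, Real.norm_eq_abs, abs_of_pos hρ] at this
    exact this
  have hexpm : Complex.exp (((β' + m * Real.pi : ℝ) : ℂ) * Complex.I)
      = Complex.exp ((β':ℂ) * Complex.I) * (-1:ℂ)^m := by
    have : ((β' + m * Real.pi : ℝ) : ℂ) * Complex.I
        = (β':ℂ) * Complex.I + ((m * Real.pi : ℝ) : ℂ) * Complex.I := by
      push_cast; ring
    rw [this, Complex.exp_add, exp_int_pi m]
  rcases neg_one_zpow_real m with ⟨h1, h2⟩ | ⟨h1, h2⟩
  · have hvpos : 0 < v := by rw [h1, one_mul] at hv; exact hv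
    have hveq : v = ρ := by rw [habs, abs_of_pos hvpos]
    rw [hveq] at h
    have := mul_left_cancel₀ (show (ρ:ℂ) ≠ 0 by exact_mod_cast hρ.ne') h
    rw [hexpm]
    have h1c : (-1:ℂ)^m = 1 := Even.neg_one_zpow h2
    rw [h1c, mul_one]
    exact this
  · have hvneg : v < 0 := by
      rw [h1] at hv; nlinarith
    have hveq : v = -ρ := by rw [habs, abs_of_neg hvneg]; ring
    rw [hveq] at h
    have h' : (ρ:ℂ) * Complex.exp ((G:ℂ) * Complex.I)
        = (ρ:ℂ) * (Complex.exp ((β':ℂ) * Complex.I) * (-1:ℂ)^m) := by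
      rw [h, Odd.neg_one_zpow h2]
      push_cast; ring
    have := mul_left_cancel₀ (show (ρ:ℂ) ≠ 0 by exact_mod_cast hρ.ne') h'
    rw [hexpm]
    exact this

lemma card_filter_le : ∀ (n c : ℕ), (Finset.univ.filter (fun i : Fin n => c ≤ i.1)).card = n - c
  | 0, c => by simp
  | (m+1), 0 => by
      simp [Finset.filter_true_of_mem]
  | (m+1), (c+1) => by
      classical
      rw [Fin.card_filter_univ_succ (p := fun i : Fin (m+1) => c+1 ≤ i.1)]
      rw [if_neg (by simp)]
      have : (Finset.univ.filter (fun x : Fin m => c+1 ≤ (Fin.succ x).1)).card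
          = (Finset.univ.filter (fun x : Fin m => c ≤ x.1)).card := by
        apply Finset.card_bij (fun x _ => x) <;> simp [Fin.val_succ]
      rw [this, card_filter_le m c]
      omega

lemma prodSign {n : ℕ} (f : Fin n → ℝ) (x : ℝ) (c : ℕ)
    (hlt : ∀ i : Fin n, i.1 < c → f i < x) (hgt : ∀ i : Fin n, c ≤ i.1 → x < f i) :
    ∏ i, (x - f i) = (-1:ℝ)^(n - c) * ∏ i, |x - f i| := by
  classical
  rw [← Finset.prod_filter_mul_prod_filter_not Finset.univ (fun i : Fin n => c ≤ i.1)
        (fun i => x - f i),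
      ← Finset.prod_filter_mul_prod_filter_not Finset.univ (fun i : Fin n => c ≤ i.1)
        (fun i => |x - f i|)]
  have h1 : ∏ i ∈ Finset.univ.filter (fun i : Fin n => c ≤ i.1), (x - f i)
      = (-1:ℝ)^(n-c) * ∏ i ∈ Finset.univ.filter (fun i : Fin n => c ≤ i.1), |x - f i| := by
    rw [← card_filter_le n c, ← Finset.prod_const (-1:ℝ), ← Finset.prod_mul_distrib]
    apply Finset.prod_congr rfl
    intro i hi
    have := hgt i (Finset.mem_filter.mp hi).2
    rw [abs_of_neg (by linarith : x - f i < 0)]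
    ring
  have h2 : ∏ i ∈ Finset.univ.filter (fun i : Fin n => ¬ c ≤ i.1), (x - f i)
      = ∏ i ∈ Finset.univ.filter (fun i : Fin n => ¬ c ≤ i.1), |x - f i| := by
    apply Finset.prod_congr rfl
    intro i hi
    have hic : i.1 < c := by
      have := (Finset.mem_filter.mp hi).2
      omega
    have := hlt i hic
    exact (abs_of_pos (by linarith : 0 < x - f i)).symm
  rw [h1, h2]
  ring

lemma argUpper {z : ℂ} (hz : 0 < z.im) :
    Complex.arg z = Real.pi/2 - Real.arctan (z.re / z.im) := by
  set t : ℝ := z.re / z.im with ht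
  have hs0 : (0:ℝ) < Real.sqrt (1 + t^2) := by positivity
  have habs : ‖z‖ = z.im * Real.sqrt (1 + t^2) := by
    rw [Complex.norm_def, Complex.normSq_apply]
    rw [show z.re * z.re + z.im * z.im = (z.im)^2 * (1 + t^2) by rw [ht]; field_simp; ring]
    rw [Real.sqrt_mul (sq_nonneg _), Real.sqrt_sq_eq_abs, abs_of_pos hz]
  have hθ : Real.pi/2 - Real.arctan t ∈ Set.Ioc (-Real.pi) Real.pi := by
    have h1 := Real.arctan_lt_pi_div_two t
    have h2 := Real.neg_pi_div_two_lt_arctan t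
    constructor <;> nlinarith [Real.pi_pos]
  have hzeq : z = (‖z‖ : ℝ) *
      (Complex.cos ((Real.pi/2 - Real.arctan t : ℝ) : ℂ)
        + Complex.sin ((Real.pi/2 - Real.arctan t : ℝ) : ℂ) * Complex.I) := by
    rw [← Complex.ofReal_cos, ← Complex.ofReal_sin]
    rw [Real.cos_pi_div_two_sub, Real.sin_pi_div_two_sub, Real.sin_arctan, Real.cos_arctan]
    apply Complex.ext
    · simp only [Complex.add_re, Complex.mul_re, Complex.ofReal_re, Complex.ofReal_im,
        Complex.I_re, Complex.I_im, Complex.mul_im]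
      rw [habs]
      field_simp
      rw [ht]; field_simp
      ring
    · simp only [Complex.add_im, Complex.mul_im, Complex.ofReal_re, Complex.ofReal_im,
        Complex.I_re, Complex.I_im, Complex.mul_re]
      rw [habs]
      field_simp
      ring
  have harg := Complex.arg_mul_cos_add_sin_mul_I
      (by rw [habs]; positivity : 0 < ‖z‖) hθ
  rw [← hzeq] at harg
  exact harg

lemma fin_strictMono {n : ℕ} {f : Fin n → ℝ}
    (h : ∀ k : ℕ, (hk : k + 1 < n) → f ⟨k, by omega⟩ < f ⟨k+1, hk⟩) : StrictMono f := by
  have key : ∀ (d : ℕ) (i j : Fin n), j.1 = i.1 + d + 1 → f i < f j := by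
    intro d
    induction d with
    | zero =>
      intro i j hij
      have hk : i.1 + 1 < n := by omega
      have := h i.1 hk
      have hi : (⟨i.1, by omega⟩ : Fin n) = i := Fin.eta i _
      have hj : (⟨i.1 + 1, hk⟩ : Fin n) = j := by
        apply Fin.ext; simp only [Fin.val_mk]; omega
      rwa [hi, hj] at this
    | succ d ih =>
      intro i j hij
      have hk : i.1 + d + 1 < n := by omega
      have h1 : f i < f ⟨i.1 + d + 1, hk⟩ := ih i ⟨i.1+d+1, hk⟩ rfl
      have h2 : f ⟨i.1 + d + 1, hk⟩ < f j := by
        have := h (i.1 + d + 1) (by omega)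
        have hj : (⟨i.1 + d + 2, by omega⟩ : Fin n) = j := by
          apply Fin.ext; simp only [Fin.val_mk]; omega
        rwa [hj] at this
      linarith
  intro i j hij
  exact key (j.1 - i.1 - 1) i j (by omega)

lemma signPos {c : ℕ} {m : ℤ} {P : ℝ} (hP : 0 < P) (hpar : Even (m - c)) :
    0 < (-1:ℝ)^m * ((-1:ℝ)^c * P) := by
  rw [negOnePow_eq hpar, ← mul_assoc, ← pow_add]
  rw [Even.neg_one_pow ⟨c, rfl⟩, one_mul]
  exact hP

lemma mem_window {β' : ℝ} (hβ0 : 0 < β') (hβπ : β' < Real.pi) (Wv T' : ℤ)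
    (h : T' = Wv ∨ T' = Wv + 1) :
    β' + (T':ℝ) * Real.pi ∈ Set.Ioo ((Wv:ℝ)*Real.pi) ((Wv:ℝ)*Real.pi + 2*Real.pi) := by
  have hpi := Real.pi_pos
  rcases h with h | h <;> subst h <;> constructor <;> push_cast <;> nlinarith

end GenHBAux

open GenHBAux Real Complex Filter Finset Set

set_option maxHeartbeats 4000000

/-- Generalized Hermite–Biehler theorem (direct part, broken interlacing around
`t = 0`): if `p = ∏ᵢ (z - λᵢ)` and `r = ∏ᵢ (z - μᵢ)` are monic real of degree `n` with
`λ₁ < μ₁ < ⋯ < λ_s < μ_s < 0 < μ_{s+1} < λ_{s+1} < ⋯ < μ_n < λ_n` for some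
`0 ≤ s ≤ n - 1`, `Im α > 0`, and `h = α p + (1 - α) r = ∏ⱼ (z - zⱼ)`, then all `zⱼ`
are non-real, `∑ⱼ Arg_{[0,π)} zⱼ < Arg α`, the number of `zⱼ` in the open upper
half-plane equals `n - s` and the number in the open lower half-plane equals `s`. -/
theorem genHB_around_zero_direct (n s : ℕ) (hs : s ≤ n - 1)
    (lam mu : Fin n → ℝ) (hbi : BrokenInterlace n s lam mu)
    (α : ℂ) (hα : 0 < α.im) (z : Fin n → ℂ)
    (hfact : Polynomial.C α
          * ((∏ i, (Polynomial.X - Polynomial.C (lam i)) : Polynomial ℝ).map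
              (algebraMap ℝ ℂ))
        + Polynomial.C (1 - α)
          * ((∏ i, (Polynomial.X - Polynomial.C (mu i)) : Polynomial ℝ).map
              (algebraMap ℝ ℂ))
      = ∏ j, (Polynomial.X - Polynomial.C (z j))) :
    (∀ j, (z j).im ≠ 0) ∧
    (∑ j, arg0pi (z j)) < argPV α ∧
    (Finset.univ.filter fun j => 0 < (z j).im).card = n - s ∧
    (Finset.univ.filter fun j => (z j).im < 0).card = s := by
  classical
  obtain ⟨hbi1, hbi2, hbi3, hbi4⟩ := hbi
  set β := Complex.arg α with hβdef
  have hβ : β = Real.pi/2 - Real.arctan (α.re / α.im) := argUpper hα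
  have hβIoo : 0 < β ∧ β < Real.pi := by
    have h1 := Real.arctan_lt_pi_div_two (α.re / α.im)
    have h2 := Real.neg_pi_div_two_lt_arctan (α.re / α.im)
    constructor <;> rw [hβ] <;> nlinarith [Real.pi_pos]
  have hargPV : argPV α = β := by
    rw [argPV, if_neg (by linarith [hβIoo.2] : ¬ Complex.arg α = Real.pi)]
  -- case n = 0
  rcases Nat.eq_zero_or_pos n with hn0 | hn
  · subst hn0
    have hs0 : s = 0 := by omega
    subst hs0
    refine ⟨fun j => absurd j.2 (by omega), ?_, by simp, by simp⟩
    rw [hargPV]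
    simpa using hβIoo.1
  -- basic ordering facts
  have lamMono : StrictMono lam := by
    apply fin_strictMono
    intro k hk
    rcases lt_trichotomy (k+1) s with h | h | h
    · have h1 := (hbi1 ⟨k, by omega⟩ (by simpa using by omega : (⟨k, by omega⟩ : Fin n).1 < s)).1
      have h2 := hbi3 ⟨k, by omega⟩ hk (by simpa using h)
      simp only [Fin.val_mk] at h2 ⊢
      linarith
    · have h1 := hbi1 ⟨k, by omega⟩ (by simp; omega)
      have h2 := hbi2 ⟨k+1, hk⟩ (by simp; omega)
      linarith [h1.1, h1.2, h2.1, h2.2]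
    · have h1 := hbi4 ⟨k, by omega⟩ hk (by simp; omega)
      have h2 := hbi2 ⟨k+1, hk⟩ (by simp; omega)
      simp only [Fin.val_mk] at h1 ⊢
      linarith [h2.1, h2.2]
  have muMono : StrictMono mu := by
    apply fin_strictMono
    intro k hk
    rcases lt_trichotomy (k+1) s with h | h | h
    · have h1 := hbi3 ⟨k, by omega⟩ hk (by simpa using h)
      have h2 := (hbi1 ⟨k+1, hk⟩ (by simpa using h)).1
      simp only [Fin.val_mk] at h1 ⊢
      linarith
    · have h1 := (hbi1 ⟨k, by omega⟩ (by simp; omega)).2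
      have h2 := (hbi2 ⟨k+1, hk⟩ (by simp; omega)).1
      linarith
    · have h1 := (hbi2 ⟨k, by omega⟩ (by simp; omega)).2
      have h2 := hbi4 ⟨k, by omega⟩ hk (by simp; omega)
      simp only [Fin.val_mk] at h2 ⊢
      linarith
  have lamNeMu : ∀ i i' : Fin n, lam i ≠ mu i' := by
    intro i i' heq
    rcases lt_or_ge i.1 s with hi | hi <;> rcases lt_or_ge i'.1 s with hi' | hi'
    · rcases le_or_gt i.1 i'.1 with hle | hlt
      · have h1 := (hbi1 i hi).1
        have h2 : mu i ≤ mu i' := muMono.monotone (by exact hle)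
        linarith
      · have h1 := hbi3 i' (by omega) (by omega)
        have h2 : lam ⟨i'.1+1, by omega⟩ ≤ lam i := lamMono.monotone (by
          show (⟨i'.1+1, by omega⟩ : Fin n).1 ≤ i.1
          simp; omega)
        linarith
    · have h1 := (hbi1 i hi).1
      have h2 := (hbi1 i hi).2
      have h3 := (hbi2 i' hi').1
      linarith
    · have h1 := (hbi2 i hi).1
      have h2 := (hbi2 i hi).2
      have h3 := (hbi1 i' hi').2
      linarith
    · rcases le_or_gt i'.1 i.1 with hle | hlt
      · have h1 := (hbi2 i hi).2
        have h2 : mu i' ≤ mu i := muMono.monotone (by exact hle)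
        linarith
      · have h1 := hbi4 i (by omega) hi
        have h2 : mu ⟨i.1+1, by omega⟩ ≤ mu i' := muMono.monotone (by
          show (⟨i.1+1, by omega⟩ : Fin n).1 ≤ i'.1
          simp; omega)
        linarith
  set pf : ℝ → ℝ := fun x => ∏ i, (x - lam i) with hpfdef
  set rf : ℝ → ℝ := fun x => ∏ i, (x - mu i) with hrfdef
  have hα0 : α ≠ 0 := by
    intro h0
    rw [h0] at hα
    simp at hα
  have Efact : ∀ x : ℝ, α * (pf x : ℂ) + (1 - α) * (rf x : ℂ) = ∏ j, ((x:ℂ) - z j) := by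
    intro x
    have h := congrArg (Polynomial.eval (x:ℂ)) hfact
    simp only [Polynomial.eval_add, Polynomial.eval_mul, Polynomial.eval_C, Polynomial.eval_prod,
      Polynomial.eval_sub, Polynomial.eval_X, Polynomial.eval_map] at h
    rw [Polynomial.eval₂_finset_prod, Polynomial.eval₂_finset_prod] at h
    simp only [Polynomial.eval₂_sub, Polynomial.eval₂_X, Polynomial.eval₂_C] at h
    rw [← h, hpfdef, hrfdef]
    have hp : ∀ f : Fin n → ℝ, ((∏ i, (x - f i) : ℝ) : ℂ)
        = ∏ i, ((x:ℂ) - (algebraMap ℝ ℂ) (f i)) := by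
      intro f
      push_cast
      rfl
    rw [hp lam, hp mu]
  -- all roots are nonreal
  have hzim : ∀ j, (z j).im ≠ 0 := by
    intro j hj0
    set x := (z j).re with hxdef
    have hzj : ((x:ℝ):ℂ) = z j := by
      apply Complex.ext
      · simp [hxdef]
      · simp [hj0]
    have h0 : (∏ j', ((x:ℂ) - z j')) = 0 :=
      Finset.prod_eq_zero (Finset.mem_univ j) (by rw [hzj]; ring)
    have hx := (Efact x).trans h0
    have him := congrArg Complex.im hx
    have hre := congrArg Complex.re hx
    simp only [Complex.add_im, Complex.add_re, Complex.mul_im, Complex.mul_re,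
      Complex.ofReal_re, Complex.ofReal_im, Complex.sub_re, Complex.sub_im,
      Complex.one_re, Complex.one_im, Complex.zero_im, Complex.zero_re,
      mul_zero, zero_mul, add_zero, zero_add, sub_zero, zero_sub] at him hre
    have hpr : pf x = rf x := by
      have h2 : α.im * (pf x - rf x) = 0 := by linarith
      have h3 := (mul_eq_zero.mp h2).resolve_left (ne_of_gt hα)
      linarith [sub_eq_zero.mp h3]
    have hrf0 : rf x = 0 := by
      rw [hpr] at hre
      linarith
    have hpf0 : pf x = 0 := by rw [hpr]; exact hrf0
    simp only [hpfdef] at hpf0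
    simp only [hrfdef] at hrf0
    obtain ⟨i, _, hi⟩ := Finset.prod_eq_zero_iff.mp hpf0
    obtain ⟨i', _, hi'⟩ := Finset.prod_eq_zero_iff.mp hrf0
    exact lamNeMu i i' (by linarith [sub_eq_zero.mp hi, sub_eq_zero.mp hi'])
  -- setup angle functions
  set G : ℝ → ℝ := fun x => ∑ j, th (z j).re (z j).im x with hGdef
  have Gcont : Continuous G := continuous_finset_sum _ (fun j _ => th_continuous _ _)
  set ρ : ℝ → ℝ := fun x => ∏ j, Real.sqrt ((x - (z j).re)^2 + (z j).im^2) with hρdef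
  have ρpos : ∀ x, 0 < ρ x := by
    intro x
    apply Finset.prod_pos
    intro j _
    have := hzim j
    positivity
  have Gfact : ∀ x : ℝ, α * (pf x : ℂ) + (1 - α) * (rf x : ℂ)
      = (ρ x : ℂ) * Complex.exp ((G x : ℝ) * Complex.I) := by
    intro x
    rw [Efact x]
    have hfac : ∀ j : Fin n, ((x:ℂ) - z j)
        = ((Real.sqrt ((x - (z j).re)^2 + (z j).im^2) : ℝ) : ℂ)
          * Complex.exp ((th (z j).re (z j).im x : ℝ) * Complex.I) := by
      intro j
      have h := th_exp (a := (z j).re) (hzim j) x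
      rwa [Complex.re_add_im] at h
    rw [Finset.prod_congr rfl (fun j _ => hfac j), Finset.prod_mul_distrib]
    congr 1
    · rw [hρdef]
      push_cast
      rfl
    · rw [← Complex.exp_sum]
      congr 1
      rw [hGdef, ← Finset.sum_mul]
      congr 1
      push_cast
      rfl
  -- the avoidance lemma
  have avoid : ∀ (x : ℝ) (m : ℤ), (pf x = rf x → 0 < (-1:ℝ)^m * rf x) →
      ∀ M : ℤ, Odd (M - m) → G x ≠ M * Real.pi := by
    intro x m hsign M hodd hGx
    have h := Gfact x
    rw [hGx, exp_int_pi M] at h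
    have hcast : ((-1:ℂ))^M = (((-1:ℝ)^M : ℝ) : ℂ) := by
      push_cast
      rfl
    rw [hcast] at h
    have him := congrArg Complex.im h
    have hre := congrArg Complex.re h
    simp only [Complex.add_im, Complex.add_re, Complex.mul_im, Complex.mul_re,
      Complex.ofReal_re, Complex.ofReal_im, Complex.sub_re, Complex.sub_im,
      Complex.one_re, Complex.one_im, mul_zero, zero_mul, add_zero, zero_add,
      sub_zero, zero_sub] at him hre
    have hpr : pf x = rf x := by
      have h2 : α.im * (pf x - rf x) = 0 := by linarith
      have h3 := (mul_eq_zero.mp h2).resolve_left (ne_of_gt hα)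
      linarith [sub_eq_zero.mp h3]
    have hsgn := hsign hpr
    have hrfval : rf x = ρ x * (-1:ℝ)^M := by
      rw [hpr] at hre
      linarith
    have hparity : Odd (m + M) := by
      rcases hodd with ⟨t, ht⟩
      exact ⟨m + t, by omega⟩
    have hneg : (-1:ℝ)^m * (-1:ℝ)^M = -1 := by
      rw [← zpow_add₀ (by norm_num : (-1:ℝ) ≠ 0)]
      exact Odd.neg_one_zpow hparity
    rw [hrfval] at hsgn
    have hval : (-1:ℝ)^m * (ρ x * (-1:ℝ)^M) = -(ρ x) := by
      calc (-1:ℝ)^m * (ρ x * (-1:ℝ)^M) = ρ x * ((-1:ℝ)^m * (-1:ℝ)^M) := by ring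
        _ = -(ρ x) := by rw [hneg]; ring
    rw [hval] at hsgn
    linarith [ρpos x]
  -- signs of pf at points mu k, and rf(mu k) = 0, pf(mu k) ≠ 0
  have rf_mu : ∀ k : Fin n, rf (mu k) = 0 := by
    intro k
    exact Finset.prod_eq_zero (Finset.mem_univ k) (by ring)
  have pf_mu : ∀ k : Fin n,
      pf (mu k) = (-1:ℝ)^(n - (if k.1 < s then k.1+1 else k.1)) * ∏ i, |mu k - lam i| := by
    intro k
    by_cases hks : k.1 < s
    · rw [if_pos hks]
      refine prodSign lam (mu k) (k.1+1) ?_ ?_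
      · intro i hi
        have hik : i ≤ k := by rw [Fin.le_def]; omega
        calc lam i ≤ lam k := lamMono.monotone hik
          _ < mu k := (hbi1 k hks).1
      · intro i hi
        rcases lt_or_ge i.1 s with his | his
        · have hk1 : k.1 + 1 < n := by omega
          have h1 := hbi3 k hk1 (by omega)
          have h2 : lam ⟨k.1+1, hk1⟩ ≤ lam i := lamMono.monotone (by
            rw [Fin.le_def]; simp only [Fin.val_mk]; omega)
          linarith
        · have h1 := (hbi1 k hks).2
          have h2 := hbi2 i his
          linarith [h2.1, h2.2]
    · rw [if_neg hks]
      refine prodSign lam (mu k) k.1 ?_ ?_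
      · intro i hi
        rcases lt_or_ge i.1 s with his | his
        · have h1 := hbi1 i his
          have h2 := (hbi2 k (by omega)).1
          linarith [h1.1, h1.2]
        · have hi1 : i.1 + 1 < n := by omega
          have h1 := hbi4 i hi1 his
          have h2 : mu ⟨i.1+1, hi1⟩ ≤ mu k := muMono.monotone (by
            rw [Fin.le_def]; simp only [Fin.val_mk]; omega)
          linarith
      · intro i hi
        have h1 := (hbi2 k (by omega)).2
        have h2 : lam k ≤ lam i := lamMono.monotone (by rw [Fin.le_def]; omega)
        linarith
  have pf_mu_ne : ∀ k : Fin n, pf (mu k) ≠ 0 := by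
    intro k
    rw [pf_mu k]
    have : ∀ i : Fin n, |mu k - lam i| > 0 := fun i => abs_pos.mpr (sub_ne_zero.mpr (fun h => lamNeMu i k (by linarith [h.symm.le, h.le])))
    have hp : (0:ℝ) < ∏ i, |mu k - lam i| := Finset.prod_pos (fun i _ => this i)
    rcases Nat.even_or_odd (n - (if k.1 < s then k.1+1 else k.1)) with he | ho
    · rw [Even.neg_one_pow he]; nlinarith
    · rw [Odd.neg_one_pow ho]; nlinarith
  -- exp identity at mu k
  have EXPmu : ∀ (k : Fin n) (m : ℤ), Even (m - (n - (if k.1 < s then k.1+1 else k.1) : ℕ)) →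
      Complex.exp ((G (mu k) : ℂ) * Complex.I)
        = Complex.exp (((β + m * Real.pi : ℝ) : ℂ) * Complex.I) := by
    intro k m hm
    have hαexp : (α : ℂ) = ((‖α‖ : ℝ) : ℂ) * Complex.exp ((β:ℂ) * Complex.I) := by
      rw [hβdef]
      exact (Complex.norm_mul_exp_arg_mul_I α).symm
    have h := Gfact (mu k)
    rw [rf_mu k] at h
    have h' : (ρ (mu k) : ℂ) * Complex.exp (((G (mu k) : ℝ):ℂ) * Complex.I)
        = ((pf (mu k) * ‖α‖ : ℝ) : ℂ) * Complex.exp ((β:ℂ) * Complex.I) := by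
      calc (ρ (mu k) : ℂ) * Complex.exp (((G (mu k) : ℝ):ℂ) * Complex.I)
          = ((pf (mu k) : ℝ) : ℂ) * α := by rw [← h]; push_cast; ring
        _ = ((pf (mu k) * ‖α‖ : ℝ) : ℂ) * Complex.exp ((β:ℂ) * Complex.I) := by
            conv_lhs => rw [hαexp]
            push_cast
            ring
    refine expeq (ρpos _) m ?_ h'
    rw [pf_mu k]
    have hP : 0 < (∏ i, |mu k - lam i|) * ‖α‖ := by
      apply mul_pos
      · apply Finset.prod_pos
        intro i _
        rw [abs_pos, sub_ne_zero]
        exact fun hh => lamNeMu i k hh.symm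
      · exact norm_pos_iff.mpr hα0
    have hh := signPos hP hm
    have hrearr : (-1:ℝ)^(n - (if k.1 < s then k.1+1 else k.1)) * (∏ i, |mu k - lam i|)
        * ‖α‖
        = (-1:ℝ)^(n - (if k.1 < s then k.1+1 else k.1))
          * ((∏ i, |mu k - lam i|) * ‖α‖) := by ring
    calc (0:ℝ) < (-1:ℝ)^m * ((-1:ℝ)^(n - (if k.1 < s then k.1+1 else k.1))
          * ((∏ i, |mu k - lam i|) * ‖α‖)) := hh
      _ = (-1:ℝ)^m * ((-1:ℝ)^(n - (if k.1 < s then k.1+1 else k.1)) * (∏ i, |mu k - lam i|)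
          * ‖α‖) := by ring
  -- the target values
  set T : ℕ → ℤ := fun k => if s ≤ k then (k:ℤ) - n else 2*s - n - 1 - k with hTdef
  -- the walk
  have hpi := Real.pi_pos
  have Gtop : Tendsto G atTop (nhds 0) := by
    have h : Tendsto G atTop (nhds (∑ _j : Fin n, (0:ℝ))) := by
      apply tendsto_finset_sum
      intro j _
      exact th_tendsto_atTop (z j).re (hzim j)
    simpa using h
  have anchor : G (mu ⟨n-1, by omega⟩) = β + (T (n-1) : ℝ) * Real.pi := by
    set k0 : Fin n := ⟨n-1, by omega⟩ with hk0
    have havd : ∀ x, mu k0 ≤ x → ∀ M : ℤ, Odd M → G x ≠ M * Real.pi := by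
      intro x hx M hM
      refine avoid x 0 ?_ M (by simpa using hM)
      intro hpr
      rcases eq_or_lt_of_le hx with he | hlt
      · exfalso
        apply pf_mu_ne k0
        rw [he, hpr, ← he, rf_mu k0]
      · have hr : rf x = (-1:ℝ)^(n - n) * ∏ i, |x - mu i| := by
          refine prodSign mu x n ?_ ?_
          · intro i _
            calc mu i ≤ mu k0 := muMono.monotone (by rw [Fin.le_def]; simp only [hk0, Fin.val_mk]; omega)
              _ < x := hlt
          · intro i hi
            exact absurd hi (by omega)
        rw [hr]
        have hprod : 0 < ∏ i, |x - mu i| := by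
          apply Finset.prod_pos
          intro i _
          rw [abs_pos, sub_ne_zero]
          intro heq
          have : mu i ≤ mu k0 := muMono.monotone (by rw [Fin.le_def]; simp only [hk0, Fin.val_mk]; omega)
          linarith
        simpa using hprod
    have hne1 : G (mu k0) ≠ Real.pi := by
      have := havd (mu k0) le_rfl 1 ⟨0, by ring⟩
      simpa using this
    have hne2 : G (mu k0) ≠ -Real.pi := by
      have := havd (mu k0) le_rfl (-1) ⟨-1, by ring⟩
      simp only [Int.cast_neg, Int.cast_one] at this
      intro hc
      exact this (by rw [hc]; ring)
    have hlt1 : G (mu k0) < Real.pi := by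
      rcases lt_or_ge (G (mu k0)) Real.pi with h | h
      · exact h
      have hgt : Real.pi < G (mu k0) := lt_of_le_of_ne h (Ne.symm hne1)
      exfalso
      have hev : ∀ᶠ X in atTop, G X < Real.pi := Gtop.eventually_lt_const hpi
      obtain ⟨X, hX1, hX2⟩ := (hev.and (eventually_ge_atTop (mu k0))).exists
      obtain ⟨c, hc, hfc⟩ := intermediate_value_uIcc (a := mu k0) (b := X) (f := G)
        Gcont.continuousOn (by rw [Set.mem_uIcc]; right; exact ⟨hX1.le, hgt.le⟩)
      rw [Set.uIcc_of_le hX2] at hc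
      exact havd c hc.1 1 ⟨0, by ring⟩ (by rw [hfc]; simp)
    have hgt1 : -Real.pi < G (mu k0) := by
      rcases lt_or_ge (-Real.pi) (G (mu k0)) with h | h
      · exact h
      have hlt : G (mu k0) < -Real.pi := lt_of_le_of_ne h hne2
      exfalso
      have hev : ∀ᶠ X in atTop, -Real.pi < G X := Gtop.eventually_const_lt (by linarith)
      obtain ⟨X, hX1, hX2⟩ := (hev.and (eventually_ge_atTop (mu k0))).exists
      obtain ⟨c, hc, hfc⟩ := intermediate_value_uIcc (a := mu k0) (b := X) (f := G)
        Gcont.continuousOn (by rw [Set.mem_uIcc]; left; exact ⟨hlt.le, hX1.le⟩)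
      rw [Set.uIcc_of_le hX2] at hc
      exact havd c hc.1 (-1) ⟨-1, by ring⟩ (by rw [hfc]; push_cast; ring)
    have hTn1 : T (n-1) = -1 := by
      simp only [hTdef, if_pos hs]
      omega
    have hexp := EXPmu k0 (-1) (by
      have hcc : ¬ (k0.1 < s) := by simp only [hk0, Fin.val_mk]; omega
      rw [if_neg hcc]
      simp only [hk0, Fin.val_mk]
      rw [show (n - (n-1) : ℕ) = 1 by omega]
      decide)
    have hpin := pin (w := -Real.pi) (g := G (mu k0)) (t := β + ((-1:ℤ):ℝ) * Real.pi)
      ⟨hgt1, by linarith⟩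
      ⟨by push_cast; linarith [hβIoo.1], by push_cast; linarith [hβIoo.2]⟩
      hexp
    rw [hTn1]
    exact_mod_cast hpin
  have step : ∀ k : ℕ, (hk1 : k + 1 < n) →
      G (mu ⟨k+1, hk1⟩) = β + (T (k+1) : ℝ) * Real.pi →
      G (mu ⟨k, by omega⟩) = β + (T k : ℝ) * Real.pi := by
    intro k hk1 hprev
    set kk : Fin n := ⟨k, by omega⟩ with hkk
    set kk1 : Fin n := ⟨k+1, hk1⟩ with hkk1
    have hmukk : mu kk < mu kk1 := muMono (by rw [Fin.lt_def]; simp only [hkk, hkk1, Fin.val_mk]; omega)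
    set W : ℤ := if s ≤ k then T k else T k - 1 with hWdef
    have hWval : W = if s ≤ k then (k:ℤ) - n else 2*(s:ℤ) - n - 2 - k := by
      rw [hWdef]
      simp only [hTdef]
      by_cases h : s ≤ k <;> simp [h] <;> ring
    have hWT : T k = W ∨ T k = W + 1 := by
      rw [hWdef]
      by_cases h : s ≤ k
      · left; rw [if_pos h]
      · right; rw [if_neg h]; ring
    have hWT1 : T (k+1) = W ∨ T (k+1) = W + 1 := by
      rw [hWval]
      simp only [hTdef]
      by_cases h1 : s ≤ k <;> by_cases h2 : s ≤ k+1 <;> simp [h1, h2] <;> omega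
    have havd : ∀ x ∈ Set.Icc (mu kk) (mu kk1), ∀ j : ℤ,
        G x ≠ (W:ℝ) * Real.pi + 2*Real.pi*j := by
      intro x hx j hGx
      refine avoid x ((n:ℤ)-1-k) ?_ (W + 2*j) (by
        rw [hWval]
        refine Int.odd_iff.mpr ?_
        by_cases h : s ≤ k <;> simp [h] <;> omega) ?_
      · intro hpr
        rcases eq_or_lt_of_le hx.1 with he | h1
        · exfalso
          apply pf_mu_ne kk
          rw [he, hpr, ← he, rf_mu kk]
        · rcases eq_or_lt_of_le hx.2 with he2 | h2
          · exfalso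
            apply pf_mu_ne kk1
            rw [← he2, hpr, he2, rf_mu kk1]
          · have hr : rf x = (-1:ℝ)^(n - (k+1)) * ∏ i, |x - mu i| := by
              refine prodSign mu x (k+1) ?_ ?_
              · intro i hi
                calc mu i ≤ mu kk := muMono.monotone (by rw [Fin.le_def]; simp only [hkk, Fin.val_mk]; omega)
                  _ < x := h1
              · intro i hi
                calc x < mu kk1 := h2
                  _ ≤ mu i := muMono.monotone (by rw [Fin.le_def]; simp only [hkk1, Fin.val_mk]; omega)
            rw [hr]
            refine signPos (Finset.prod_pos fun i _ => abs_pos.mpr (sub_ne_zero.mpr ?_)) ?_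
            · intro heq
              rcases le_or_gt i.1 k with hik | hik
              · have : mu i ≤ mu kk := muMono.monotone (by rw [Fin.le_def]; simp only [hkk, Fin.val_mk]; omega)
                linarith
              · have : mu kk1 ≤ mu i := muMono.monotone (by rw [Fin.le_def]; simp only [hkk1, Fin.val_mk]; omega)
                linarith
            · refine Int.even_iff.mpr ?_
              omega
      · rw [hGx]
        push_cast
        ring
    have hfy : G (mu kk1) ∈ Set.Ioo ((W:ℝ)*Real.pi) ((W:ℝ)*Real.pi + 2*Real.pi) := by
      rw [hprev]
      exact mem_window hβIoo.1 hβIoo.2 W (T (k+1)) hWT1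
    have hwin := window_mem Gcont (a := mu kk) (b := mu kk1) (w := (W:ℝ)*Real.pi)
      ⟨hmukk.le, le_rfl⟩ havd hfy
    have hGkk := hwin (mu kk) ⟨le_rfl, hmukk.le⟩
    have hexp := EXPmu kk (T k) (by
      simp only [hTdef]
      by_cases h : s ≤ k
      · rw [if_pos h, if_neg (show ¬ (kk.1 < s) by show ¬ (k < s); omega)]
        refine Int.even_iff.mpr ?_
        have : (kk.1 : ℤ) = k := by rw [hkk]
        omega
      · rw [if_neg h, if_pos (show kk.1 < s by show k < s; omega)]
        refine Int.even_iff.mpr ?_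
        have : (kk.1 : ℤ) = k := by rw [hkk]
        omega)
    exact pin hGkk (mem_window hβIoo.1 hβIoo.2 W (T k) hWT) hexp
  have walk : ∀ j : ℕ, j ≤ n - 1 →
      G (mu ⟨n-1-j, by omega⟩) = β + (T (n-1-j)) * Real.pi := by
    intro j
    induction j with
    | zero =>
      intro _
      exact anchor
    | succ i ih =>
      intro hij
      have hk1 : (n-1-(i+1)) + 1 < n := by omega
      have hprev' : G (mu ⟨n-1-(i+1)+1, hk1⟩) = β + (T (n-1-(i+1)+1) : ℝ) * Real.pi := by
        have hfin : (⟨n-1-(i+1)+1, hk1⟩ : Fin n) = ⟨n-1-i, by omega⟩ := by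
          apply Fin.ext
          simp only [Fin.val_mk]
          omega
        have hnat : n-1-(i+1)+1 = n-1-i := by omega
        simp only [hnat]
        exact ih (by omega)
      exact step (n-1-(i+1)) hk1 hprev'
  -- value at mu s
  have hsn : s < n := by omega
  have Gmus : G (mu ⟨s, hsn⟩) = β + ((s:ℤ) - n) * Real.pi := by
    have := walk (n-1-s) (by omega)
    have he : n-1-(n-1-s) = s := by omega
    rw [show (⟨n-1-(n-1-s), by omega⟩ : Fin n) = ⟨s, hsn⟩ by apply Fin.ext; simp [he]] at this
    rw [this, he, hTdef]
    simp
  -- value of G at 0 and the quantity δ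
  set A : ℝ := ∏ i, |(0:ℝ) - lam i| with hAdef
  set B : ℝ := ∏ i, |(0:ℝ) - mu i| with hBdef
  have hApos : 0 < A := by
    apply Finset.prod_pos
    intro i _
    rcases lt_or_ge i.1 s with hi | hi
    · have := (hbi1 i hi).1; have := (hbi1 i hi).2
      rw [abs_pos]; intro h; linarith [sub_eq_zero.mp h]
    · have h1 := (hbi2 i hi).1; have h2 := (hbi2 i hi).2
      rw [abs_pos]; intro h; linarith [sub_eq_zero.mp h]
  have hBpos : 0 < B := by
    apply Finset.prod_pos
    intro i _
    rcases lt_or_ge i.1 s with hi | hi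
    · have := (hbi1 i hi).2
      rw [abs_pos]; intro h; linarith [sub_eq_zero.mp h]
    · have := (hbi2 i hi).1
      rw [abs_pos]; intro h; linarith [sub_eq_zero.mp h]
  have hBA : B < A := by
    have key : ∀ i : Fin n, |(0:ℝ) - mu i| < |(0:ℝ) - lam i| := by
      intro i
      rcases lt_or_ge i.1 s with hi | hi
      · have h1 := (hbi1 i hi).1
        have h2 := (hbi1 i hi).2
        rw [abs_of_pos (by linarith), abs_of_pos (by linarith)]
        linarith
      · have h1 := (hbi2 i hi).1
        have h2 := (hbi2 i hi).2
        rw [abs_of_neg (by linarith), abs_of_neg (by linarith)]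
        linarith
    rw [hBdef, hAdef]
    refine Finset.prod_lt_prod (fun i _ => ?_) (fun i _ => (key i).le)
      ⟨⟨0, hn⟩, Finset.mem_univ _, key _⟩
    rw [abs_pos, sub_ne_zero]
    intro h
    rcases lt_or_ge i.1 s with hi | hi
    · linarith [(hbi1 i hi).2, h.symm.le, h.le]
    · linarith [(hbi2 i hi).1, h.symm.le, h.le]
  set w₀ : ℂ := (B:ℝ) + ((A - B : ℝ) : ℂ) * α with hw₀def
  have hw₀im : 0 < w₀.im := by
    rw [hw₀def]
    simp only [Complex.add_im, Complex.ofReal_im, Complex.mul_im, Complex.ofReal_re, zero_mul,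
      zero_add, mul_zero]
    nlinarith
  set δ := Complex.arg w₀ with hδdef
  have hδIoo : 0 < δ ∧ δ < Real.pi := by
    rw [hδdef, argUpper hw₀im]
    have h1 := Real.arctan_lt_pi_div_two (w₀.re / w₀.im)
    have h2 := Real.neg_pi_div_two_lt_arctan (w₀.re / w₀.im)
    constructor <;> nlinarith [Real.pi_pos]
  have hδβ : δ < β := by
    rw [hδdef, hβ, argUpper hw₀im]
    have harct : Real.arctan (α.re / α.im) < Real.arctan (w₀.re / w₀.im) := by
      apply Real.arctan_strictMono
      rw [div_lt_div_iff₀ hα hw₀im]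
      have hre : w₀.re = B + (A - B) * α.re := by
        rw [hw₀def]
        simp [Complex.add_re, Complex.mul_re]
      have him : w₀.im = (A - B) * α.im := by
        rw [hw₀def]
        simp [Complex.add_im, Complex.mul_im]
      rw [hre, him]
      nlinarith
    linarith
  have G0 : G 0 = δ + ((s:ℤ) - n) * Real.pi := by
    have h0mus : (0:ℝ) ≤ mu ⟨s, hsn⟩ := (hbi2 ⟨s, hsn⟩ le_rfl).1.le
    have havd : ∀ x ∈ Set.Icc (0:ℝ) (mu ⟨s, hsn⟩), ∀ j : ℤ,
        G x ≠ (((s:ℤ) - n - 1 : ℤ):ℝ) * Real.pi + 2*Real.pi*j := by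
      intro x hx j hGx
      refine avoid x ((n:ℤ)-s) ?_ ((s:ℤ) - n - 1 + 2*j) (Int.odd_iff.mpr (by omega)) ?_
      · intro hpr
        rcases eq_or_lt_of_le hx.2 with he2 | h2
        · exfalso
          apply pf_mu_ne ⟨s, hsn⟩
          rw [← he2, hpr, he2, rf_mu]
        · have hr : rf x = (-1:ℝ)^(n - s) * ∏ i, |x - mu i| := by
            refine prodSign mu x s ?_ ?_
            · intro i hi
              linarith [(hbi1 i hi).2, hx.1]
            · intro i hi
              calc x < mu ⟨s, hsn⟩ := h2
                _ ≤ mu i := muMono.monotone (by rw [Fin.le_def]; simp only [Fin.val_mk]; omega)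
          rw [hr]
          refine signPos (Finset.prod_pos fun i _ => abs_pos.mpr (sub_ne_zero.mpr ?_)) ?_
          · intro heq
            rcases lt_or_ge i.1 s with hi | hi
            · linarith [(hbi1 i hi).2, hx.1]
            · have : mu ⟨s, hsn⟩ ≤ mu i := muMono.monotone (by rw [Fin.le_def]; simp only [Fin.val_mk]; omega)
              linarith
          · refine Int.even_iff.mpr ?_
            omega
      · rw [hGx]
        push_cast
        ring
    have hfy : G (mu ⟨s, hsn⟩) ∈ Set.Ioo ((((s:ℤ) - n - 1 : ℤ):ℝ) * Real.pi)
        ((((s:ℤ) - n - 1 : ℤ):ℝ) * Real.pi + 2*Real.pi) := by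
      rw [Gmus]
      constructor
      · push_cast
        nlinarith [hβIoo.1, hpi]
      · push_cast
        nlinarith [hβIoo.2, hpi]
    have hwin := window_mem Gcont (a := (0:ℝ)) (b := mu ⟨s, hsn⟩)
      (w := (((s:ℤ) - n - 1 : ℤ):ℝ) * Real.pi) ⟨h0mus, le_rfl⟩ havd hfy
    have hG0mem := hwin 0 ⟨le_rfl, h0mus⟩
    -- exponential identity at 0
    have hpf0 : pf 0 = (-1:ℝ)^(n-s) * A := by
      rw [hAdef]
      refine prodSign lam 0 s ?_ ?_
      · intro i hi
        linarith [(hbi1 i hi).1, (hbi1 i hi).2]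
      · intro i hi
        linarith [(hbi2 i hi).1, (hbi2 i hi).2]
    have hrf0 : rf 0 = (-1:ℝ)^(n-s) * B := by
      rw [hBdef]
      refine prodSign mu 0 s ?_ ?_
      · intro i hi
        linarith [(hbi1 i hi).2]
      · intro i hi
        linarith [(hbi2 i hi).1]
    have hw₀ne : w₀ ≠ 0 := by
      intro h0
      rw [h0] at hw₀im
      simp at hw₀im
    have hw0exp : w₀ = ((‖w₀‖ : ℝ):ℂ) * Complex.exp ((δ:ℂ) * Complex.I) := by
      rw [hδdef]
      exact (Complex.norm_mul_exp_arg_mul_I w₀).symm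
    have h' : (ρ 0 : ℂ) * Complex.exp (((G 0 : ℝ):ℂ) * Complex.I)
        = (((-1:ℝ)^(n-s) * ‖w₀‖ : ℝ):ℂ) * Complex.exp ((δ:ℂ) * Complex.I) := by
      calc (ρ 0 : ℂ) * Complex.exp (((G 0 : ℝ):ℂ) * Complex.I)
          = α * (pf 0 : ℂ) + (1 - α) * (rf 0 : ℂ) := (Gfact 0).symm
        _ = (((-1:ℝ)^(n-s) : ℝ):ℂ) * w₀ := by
            rw [hpf0, hrf0, hw₀def]
            push_cast
            ring
        _ = (((-1:ℝ)^(n-s) * ‖w₀‖ : ℝ):ℂ) * Complex.exp ((δ:ℂ) * Complex.I) := by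
            conv_lhs => rw [hw0exp]
            push_cast
            ring
    have hexp := expeq (ρpos 0) ((s:ℤ)-n)
      (signPos (norm_pos_iff.mpr hw₀ne) (Int.even_iff.mpr (by omega))) h'
    have hpin := pin (w := (((s:ℤ) - n - 1 : ℤ):ℝ) * Real.pi) (g := G 0)
      (t := δ + (((s:ℤ)-n : ℤ):ℝ) * Real.pi) hG0mem
      ⟨by push_cast; nlinarith [hδIoo.1, hpi], by push_cast; nlinarith [hδIoo.2, hpi]⟩
      hexp
    rw [hpin]
    push_cast
    ring
  -- counts
  set np := (Finset.univ.filter fun j => 0 < (z j).im).card with hnpdef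
  set nm := (Finset.univ.filter fun j => (z j).im < 0).card with hnmdef
  have hnpnm : np + nm = n := by
    rw [hnpdef, hnmdef]
    have hfe : (Finset.univ.filter fun j => (z j).im < 0)
        = (Finset.univ.filter fun j => ¬ 0 < (z j).im) := by
      apply Finset.filter_congr
      intro j _
      constructor
      · intro h; exact not_lt.mpr h.le
      · intro h; exact lt_of_le_of_ne (not_lt.mp h) (hzim j)
    rw [hfe, Finset.card_filter_add_card_filter_not]
    exact (Fintype.card_fin n)
  have hcount : np = n - s ∧ nm = s := by
    have Gbot : Tendsto G atBot
        (nhds (∑ j : Fin n, if 0 < (z j).im then -Real.pi else Real.pi)) := by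
      apply tendsto_finset_sum
      intro j _
      exact th_tendsto_atBot (z j).re (hzim j)
    set L : ℝ := ∑ j : Fin n, if 0 < (z j).im then -Real.pi else Real.pi with hLdef
    have hfe : (Finset.univ.filter fun j => ¬ 0 < (z j).im)
        = (Finset.univ.filter fun j => (z j).im < 0) := by
      apply Finset.filter_congr
      intro j _
      constructor
      · intro h
        exact lt_of_le_of_ne (not_lt.mp h) (hzim j)
      · intro h
        exact not_lt.mpr h.le
    have hLval : L = (nm:ℝ)*Real.pi - (np:ℝ)*Real.pi := by
      rw [hLdef, Finset.sum_ite, Finset.sum_const, Finset.sum_const, hfe]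
      rw [hnpdef, hnmdef]
      simp only [nsmul_eq_mul]
      ring
    have havd : ∀ x, x ≤ mu ⟨0, by omega⟩ → ∀ j : ℤ,
        G x ≠ ((2*(s:ℤ) - n - 1 : ℤ):ℝ) * Real.pi + 2*Real.pi*j := by
      intro x hx j hGx
      refine avoid x (n:ℤ) ?_ (2*(s:ℤ) - n - 1 + 2*j) (Int.odd_iff.mpr (by omega)) ?_
      · intro hpr
        rcases eq_or_lt_of_le hx with he | hlt
        · exfalso
          apply pf_mu_ne ⟨0, by omega⟩
          rw [← he, hpr, he, rf_mu]
        · have hr : rf x = (-1:ℝ)^(n - 0) * ∏ i, |x - mu i| := by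
            refine prodSign mu x 0 (fun i hi => absurd hi (by omega)) ?_
            intro i _
            calc x < mu ⟨0, by omega⟩ := hlt
              _ ≤ mu i := muMono.monotone (by rw [Fin.le_def]; simp only [Fin.val_mk]; omega)
          rw [hr]
          refine signPos (Finset.prod_pos fun i _ => abs_pos.mpr (sub_ne_zero.mpr ?_))
            (Int.even_iff.mpr (by omega))
          intro heq
          have : mu ⟨0, by omega⟩ ≤ mu i := muMono.monotone (by rw [Fin.le_def]; simp only [Fin.val_mk]; omega)
          linarith
      · rw [hGx]
        push_cast
        ring
    have hGmu0 : G (mu ⟨0, by omega⟩) = β + (T 0 : ℝ) * Real.pi := by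
      have h := walk (n-1) le_rfl
      have hfin : (⟨n-1-(n-1), by omega⟩ : Fin n) = ⟨0, by omega⟩ := by
        apply Fin.ext
        simp only [Fin.val_mk]
        omega
      rw [hfin, show n-1-(n-1) = 0 by omega] at h
      exact h
    have hT0win : G (mu ⟨0, by omega⟩) ∈ Set.Ioo (((2*(s:ℤ)-n-1:ℤ):ℝ)*Real.pi)
        (((2*(s:ℤ)-n-1:ℤ):ℝ)*Real.pi + 2*Real.pi) := by
      rw [hGmu0]
      have hT0 : T 0 = 2*(s:ℤ)-n-1 ∨ T 0 = 2*(s:ℤ)-n := by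
        simp only [hTdef]
        by_cases h : s ≤ 0 <;> simp [h] <;> omega
      rcases hT0 with h | h <;> rw [h] <;> constructor <;> push_cast <;>
        nlinarith [hβIoo.1, hβIoo.2, hpi]
    have hwinx : ∀ x, x ≤ mu ⟨0, by omega⟩ → G x ∈ Set.Ioo (((2*(s:ℤ)-n-1:ℤ):ℝ)*Real.pi)
        (((2*(s:ℤ)-n-1:ℤ):ℝ)*Real.pi + 2*Real.pi) := by
      intro x hx
      exact window_mem Gcont (a := x) (b := mu ⟨0, by omega⟩)
        (w := ((2*(s:ℤ)-n-1:ℤ):ℝ)*Real.pi) ⟨hx, le_rfl⟩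
        (fun y hy => havd y hy.2) hT0win x ⟨le_rfl, hx⟩
    have hLlb : ((2*(s:ℤ)-n-1:ℤ):ℝ)*Real.pi ≤ L := by
      apply ge_of_tendsto Gbot
      filter_upwards [eventually_le_atBot (mu ⟨0, by omega⟩)] with x hx
      exact (hwinx x hx).1.le
    have hLub : L ≤ ((2*(s:ℤ)-n-1:ℤ):ℝ)*Real.pi + 2*Real.pi := by
      apply le_of_tendsto Gbot
      filter_upwards [eventually_le_atBot (mu ⟨0, by omega⟩)] with x hx
      exact (hwinx x hx).2.le
    rw [hLval] at hLlb hLub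
    have h1 : 2*(s:ℤ) - n - 1 ≤ (nm:ℤ) - np := by
      by_contra hcon
      push_neg at hcon
      have hr : ((nm:ℝ) - np) ≤ 2*(s:ℝ) - n - 2 := by
        have : (nm:ℤ) - np ≤ 2*(s:ℤ) - n - 2 := by omega
        exact_mod_cast this
      push_cast at hLlb
      nlinarith [hpi]
    have h2 : (nm:ℤ) - np ≤ 2*(s:ℤ) - n + 1 := by
      by_contra hcon
      push_neg at hcon
      have hr : 2*(s:ℝ) - n + 2 ≤ ((nm:ℝ) - np) := by
        have : 2*(s:ℤ) - n + 2 ≤ (nm:ℤ) - np := by omega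
        exact_mod_cast this
      push_cast at hLub
      nlinarith [hpi]
    constructor <;> omega
  -- the sum
  have hsum : (∑ j, arg0pi (z j)) = G 0 + np * Real.pi := by
    have per : ∀ j : Fin n, arg0pi (z j)
        = th (z j).re (z j).im 0 + (if 0 < (z j).im then Real.pi else 0) := by
      intro j
      have hb := hzim j
      have hfac := th_exp (a := (z j).re) hb 0
      rw [Complex.re_add_im] at hfac
      push_cast at hfac
      set θ0 := th (z j).re (z j).im 0 with hθ0
      set r0 := Real.sqrt ((0 - (z j).re)^2 + (z j).im^2) with hr0
      have hr0pos : 0 < r0 := by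
        rw [hr0]
        have h1 : (z j).im ≠ 0 := hb
        positivity
      have hzj : z j = (r0:ℂ) * (- Complex.exp ((θ0:ℝ) * Complex.I)) := by
        have h : z j = -((0:ℂ) - z j) := by ring
        rw [h, hfac]
        ring
      rcases lt_or_gt_of_ne hb with hneg | hpos
      · have hθm := th_mem_neg (a := (z j).re) hneg 0
        have hzeq : z j = (r0:ℂ) * (Complex.cos ((θ0 - Real.pi : ℝ):ℂ)
            + Complex.sin ((θ0 - Real.pi : ℝ):ℂ) * Complex.I) := by
          rw [hzj, ← Complex.exp_mul_I]
          congr 1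
          rw [show ((θ0 - Real.pi : ℝ):ℂ) * Complex.I
              = ((θ0:ℝ):ℂ) * Complex.I + (-(((Real.pi:ℝ):ℂ) * Complex.I)) by push_cast; ring]
          rw [Complex.exp_add, Complex.exp_neg, Complex.exp_pi_mul_I]
          norm_num
        have harg : Complex.arg (z j) = θ0 - Real.pi := by
          rw [hzeq]
          exact Complex.arg_mul_cos_add_sin_mul_I hr0pos
            ⟨by linarith [hθm.1], by linarith [hθm.2, hpi]⟩
        simp only [arg0pi, if_neg (not_lt.mpr hneg.le), if_pos hneg, harg,
          if_neg (not_lt.mpr hneg.le)]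
        ring
      · have hθm := th_mem_pos (a := (z j).re) hpos 0
        have hzeq : z j = (r0:ℂ) * (Complex.cos ((θ0 + Real.pi : ℝ):ℂ)
            + Complex.sin ((θ0 + Real.pi : ℝ):ℂ) * Complex.I) := by
          rw [hzj, ← Complex.exp_mul_I]
          congr 1
          rw [show ((θ0 + Real.pi : ℝ):ℂ) * Complex.I
              = ((θ0:ℝ):ℂ) * Complex.I + ((Real.pi:ℝ):ℂ) * Complex.I by push_cast; ring]
          rw [Complex.exp_add, Complex.exp_pi_mul_I]
          ring
        have harg : Complex.arg (z j) = θ0 + Real.pi := by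
          rw [hzeq]
          exact Complex.arg_mul_cos_add_sin_mul_I hr0pos
            ⟨by linarith [hθm.1, hpi], by linarith [hθm.2]⟩
        simp only [arg0pi, if_pos hpos, harg]
    rw [Finset.sum_congr rfl (fun j _ => per j), Finset.sum_add_distrib]
    have h1 : (∑ j : Fin n, th (z j).re (z j).im 0) = G 0 := rfl
    have h2 : (∑ j : Fin n, if 0 < (z j).im then Real.pi else 0) = (np:ℝ) * Real.pi := by
      rw [Finset.sum_ite, Finset.sum_const, Finset.sum_const_zero, add_zero, hnpdef]
      simp only [nsmul_eq_mul]
    rw [h1, h2]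
  refine ⟨hzim, ?_, hcount.1, hcount.2⟩
  rw [hsum, G0, hargPV, hcount.1]
  have hcast : ((n - s : ℕ) : ℝ) = (n : ℝ) - s := by
    have : s ≤ n := by omega
    push_cast [this]; ring
  rw [hcast]
  push_cast
  linarith [hδβ]
end
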